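/- arXiv:0803.0178 — 8 statements merged into one kernel-verified Lean document; each statement's English description precedes it below -/
import Mathlib

section
/- Fix β ∈ (0, log 4), α > 0, b ∈ {1, 0, −1}, and k ∈ ℝ with k ≠ K'(β)·b. Define β_n = β + b/n^α and K_n = K(β) + k/n^α for n ∈ ℕ, n ≥ 1. Then as n → ∞, the scaled free-energy functionals n^{2α}·G_{β_n,K_n}(x/n^{α/2}) converge to the Ginzburg–Landau polynomial g(x) = β(K'(β)b − k)·x² + c₄(β)·x⁴ uniformly for x in every compact subset of ℝ; that is, for every compact C ⊆ ℝ, sup_{x∈C} |n^{2α}·G_{β_n,K_n}(x/n^{α/2}) − g(x)| → 0. -/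
open Real Filter Topology

noncomputable def cgf (β t : ℝ) : ℝ :=
  Real.log ((1 + Real.exp (-β) * (Real.exp t + Real.exp (-t))) / (1 + 2 * Real.exp (-β)))

noncomputable def freeEnergyG (β K x : ℝ) : ℝ := β * K * x ^ 2 - cgf β (2 * β * K * x)

noncomputable def Kcurve (β : ℝ) : ℝ := (Real.exp β + 2) / (4 * β)

noncomputable def c4coef (β : ℝ) : ℝ := (Real.exp β + 2) ^ 2 * (4 - Real.exp β) / (8 * 24)

noncomputable def R2 (t : ℝ) : ℝ :=
  if t = 0 then 1/24 else (Real.cosh t - 1 - t^2/2) / t^4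

noncomputable def Tlog (w : ℝ) : ℝ :=
  if w = 0 then 1/2 else (w - Real.log (1+w)) / w^2

lemma cosh_eq_R2 (t : ℝ) : Real.cosh t = 1 + t^2/2 + t^4 * R2 t := by
  unfold R2
  rcases eq_or_ne t 0 with h | h
  · simp [h]
  · rw [if_neg h]; field_simp; ring

lemma log_eq_Tlog {w : ℝ} (hw : -1 < w) : Real.log (1+w) = w - w^2 * Tlog w := by
  unfold Tlog
  rcases eq_or_ne w 0 with h | h
  · simp [h]
  · rw [if_neg h]; field_simp; ring

lemma sq_le_sinh_sq (y : ℝ) : y^2 ≤ Real.sinh y ^ 2 := by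
  rcases le_or_gt 0 y with h | h
  · have := Real.self_le_sinh_iff.mpr h
    nlinarith
  · have h2 : Real.sinh (-y) ≥ -y := Real.self_le_sinh_iff.mpr (by linarith)
    rw [Real.sinh_neg] at h2
    nlinarith

lemma cosh_ge (t : ℝ) : 1 + t^2/2 ≤ Real.cosh t := by
  have h : Real.cosh t = 1 + 2 * Real.sinh (t/2) ^ 2 := by
    have := Real.cosh_two_mul (t/2)
    have h2 := Real.cosh_sq (t/2)
    rw [show 2 * (t/2) = t by ring] at this
    rw [this, h2]; ring
  have := sq_le_sinh_sq (t/2)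
  nlinarith

lemma R2_nonneg (t : ℝ) : 0 ≤ R2 t := by
  unfold R2
  rcases eq_or_ne t 0 with h | h
  · rw [if_pos h]; norm_num
  · rw [if_neg h]
    have h1 := cosh_ge t
    have h4 : (0:ℝ) < t^4 := by positivity
    apply div_nonneg (by linarith) h4.le

lemma cosh_taylor_bound {t : ℝ} (ht : |t| ≤ 1) :
    |Real.cosh t - (1 + t^2/2 + t^4/24)| ≤ t^6 := by
  have h1 := Real.exp_bound ht (n:=6) (by norm_num)
  have h2 := Real.exp_bound (x := -t) (by rwa [abs_neg]) (n:=6) (by norm_num)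
  norm_num [Finset.sum_range_succ, Nat.factorial, abs_neg] at h1 h2
  have habs : |t| ^ 6 = t ^ 6 := by
    rw [pow_abs, abs_of_nonneg (by positivity)]
  rw [habs] at h1 h2
  rw [Real.cosh_eq, abs_le]
  have e1 := abs_le.mp h1
  have e2 := abs_le.mp h2
  constructor <;> [nlinarith [e1.1, e2.1]; nlinarith [e1.2, e2.2]]

lemma continuous_R2 : Continuous R2 := by
  rw [continuous_iff_continuousAt]
  intro t
  rcases eq_or_ne t 0 with rfl | ht
  · have key : ∀ s : ℝ, |s| ≤ 1 → |R2 s - 1/24| ≤ s^2 := by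
      intro s hs
      rcases eq_or_ne s 0 with rfl | hs0
      · norm_num [R2]
      · have h4 : (0:ℝ) < s^4 := by positivity
        have hb := cosh_taylor_bound hs
        have hr : R2 s - 1/24 = (Real.cosh s - (1+s^2/2+s^4/24))/s^4 := by
          unfold R2; rw [if_neg hs0]; field_simp; ring
        rw [hr, abs_div, abs_of_pos h4, div_le_iff₀ h4]
        calc |Real.cosh s - (1+s^2/2+s^4/24)| ≤ s^6 := hb
          _ = s^2 * s^4 := by ring
    have hev : ∀ᶠ s in 𝓝 (0:ℝ), ‖R2 s - 1/24‖ ≤ s^2 := by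
      filter_upwards [eventually_abs_sub_lt (0:ℝ) one_pos] with s hs
      rw [sub_zero] at hs
      rw [Real.norm_eq_abs]
      exact key s hs.le
    have hg : Tendsto (fun s : ℝ => s^2) (𝓝 0) (𝓝 0) := by
      have h := ((continuous_pow 2).tendsto (0:ℝ))
      simpa using h
    have hsq : Tendsto (fun s : ℝ => R2 s - 1/24) (𝓝 0) (𝓝 0) :=
      squeeze_zero_norm' hev hg
    have : Tendsto R2 (𝓝 0) (𝓝 (1/24)) := by
      have := hsq.add (tendsto_const_nhds (x := (1/24 : ℝ)))
      simpa using this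
    have hR0 : R2 0 = 1/24 := by unfold R2; simp
    rw [ContinuousAt, hR0]
    exact this
  · have hev : (fun s => (Real.cosh s - 1 - s^2/2)/s^4) =ᶠ[𝓝 t] R2 := by
      filter_upwards [isOpen_compl_singleton.mem_nhds ht] with s hs
      simp only [Set.mem_compl_iff, Set.mem_singleton_iff] at hs
      unfold R2; rw [if_neg hs]
    apply ContinuousAt.congr ?_ hev
    exact ContinuousAt.div
      (((Real.continuous_cosh.continuousAt).sub continuousAt_const).sub
        ((continuousAt_pow t 2 : _).div_const 2))
      (continuousAt_pow t 4) (by positivity)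

lemma Tlog_continuousAt {w : ℝ} (hw : 0 ≤ w) : ContinuousAt Tlog w := by
  rcases eq_or_ne w 0 with rfl | hw0
  · have key : ∀ v : ℝ, |v| ≤ 1/2 → |Tlog v - 1/2| ≤ 2*|v| := by
      intro v hv
      rcases eq_or_ne v 0 with rfl | hv0
      · norm_num [Tlog]
      · have hv1 : |v| < 1 := lt_of_le_of_lt hv (by norm_num)
        have hbd := Real.abs_log_sub_add_sum_range_le (x := -v) (by rwa [abs_neg]) 2
        norm_num [Finset.sum_range_succ] at hbd
        have hb2 : |Real.log (1+v) - v + v^2/2| ≤ 2*|v|^3 := by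
          have h1 : 1 - |v| ≥ 1/2 := by linarith
          have h2 : |Real.log (1+v) - v + v^2/2|
              = |-v + v^2/2 + Real.log (1 + v)| := by
            congr 1; ring
          rw [h2]
          have h3 : |v|^3/(1-|v|) ≤ 2*|v|^3 := by
            rw [div_le_iff₀ (by linarith)]
            have : 0 ≤ |v|^3 := by positivity
            nlinarith
          calc |-v + v^2/2 + Real.log (1+v)| ≤ |v|^3/(1-|v|) := hbd
            _ ≤ 2*|v|^3 := h3
        have hv2 : (0:ℝ) < v^2 := by positivity
        have hr : Tlog v - 1/2 = -(Real.log (1+v) - v + v^2/2)/v^2 := by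
          unfold Tlog; rw [if_neg hv0]; field_simp; ring
        rw [hr, abs_div, abs_neg, abs_of_pos hv2, div_le_iff₀ hv2]
        calc |Real.log (1+v) - v + v^2/2| ≤ 2*|v|^3 := hb2
          _ ≤ 2*|v| * v^2 :=
              le_of_eq (by rw [pow_succ, sq_abs]; ring)
    have hev : ∀ᶠ v in 𝓝 (0:ℝ), ‖Tlog v - 1/2‖ ≤ 2*|v| := by
      filter_upwards [eventually_abs_sub_lt (0:ℝ) (by norm_num : (0:ℝ) < 1/2)] with v hv
      rw [sub_zero] at hv
      rw [Real.norm_eq_abs]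
      exact key v hv.le
    have hg : Tendsto (fun v:ℝ => 2*|v|) (𝓝 0) (𝓝 0) := by
      have h : Tendsto (fun v:ℝ => 2*|v|) (𝓝 0) (𝓝 (2*|(0:ℝ)|)) :=
        (continuous_const.mul continuous_abs).tendsto 0
      simpa using h
    have hsq : Tendsto (fun v : ℝ => Tlog v - 1/2) (𝓝 0) (𝓝 0) :=
      squeeze_zero_norm' hev hg
    have hT : Tendsto Tlog (𝓝 0) (𝓝 (1/2)) := by
      have := hsq.add (tendsto_const_nhds (x := (1/2 : ℝ)))
      simpa using this
    have hT0 : Tlog 0 = 1/2 := by unfold Tlog; simp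
    rw [ContinuousAt, hT0]
    exact hT
  · have hwpos : 0 < w := lt_of_le_of_ne hw (Ne.symm hw0)
    have hev : (fun v => (v - Real.log (1+v))/v^2) =ᶠ[𝓝 w] Tlog := by
      filter_upwards [isOpen_compl_singleton.mem_nhds hw0] with v hv
      simp only [Set.mem_compl_iff, Set.mem_singleton_iff] at hv
      unfold Tlog; rw [if_neg hv]
    apply ContinuousAt.congr ?_ hev
    have hlog : ContinuousAt (fun v : ℝ => Real.log (1+v)) w := by
      have : ContinuousAt Real.log (1+w) := Real.continuousAt_log (by linarith)
      exact this.comp (continuousAt_const.add continuousAt_id)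
    exact (continuousAt_id.sub hlog).div (continuousAt_pow w 2) (by positivity)

lemma R2_zero : R2 0 = 1/24 := by unfold R2; simp

lemma Tlog_zero : Tlog 0 = 1/2 := by unfold Tlog; simp



noncomputable def Pf (β b k ε : ℝ) : ℝ := (β + b*ε) * (Kcurve β + k*ε)
noncomputable def Af (β b ε : ℝ) : ℝ := 2 / (Real.exp (β + b*ε) + 2)
noncomputable def Qf (β b k ε : ℝ) : ℝ := Pf β b k ε - 2 * Af β b ε * (Pf β b k ε)^2
noncomputable def Qt (β b k ε : ℝ) : ℝ :=
  if ε = 0 then β * (deriv Kcurve β * b - k) else Qf β b k ε / ε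
noncomputable def Wf (β b k u x : ℝ) : ℝ :=
  Af β b (u^2) * (2 * (Pf β b k (u^2))^2 * x^2
    + 16 * (Pf β b k (u^2))^4 * u^2 * x^4 * R2 (2 * Pf β b k (u^2) * u * x))
noncomputable def Hfun (β b k u x : ℝ) : ℝ :=
  x^2 * Qt β b k (u^2)
  - Af β b (u^2) * (2 * Pf β b k (u^2) * x)^4 * R2 (2 * Pf β b k (u^2) * u * x)
  + (Wf β b k u x)^2 * Tlog (u^2 * Wf β b k u x)

lemma cgf_cosh (β' t : ℝ) :
    cgf β' t = Real.log (1 + (2/(Real.exp β' + 2)) * (Real.cosh t - 1)) := by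
  unfold cgf
  congr 1
  have h1 : (0:ℝ) < Real.exp β' := Real.exp_pos β'
  have h2 : (0:ℝ) < 1 + 2 * Real.exp (-β') := by positivity
  rw [Real.cosh_eq, Real.exp_neg β']
  field_simp
  ring

lemma key1 (β b k u x : ℝ) (hu : u ≠ 0) :
    freeEnergyG (β + b*u^2) (Kcurve β + k*u^2) (u*x) = u^4 * Hfun β b k u x := by
  have hε : u^2 ≠ 0 := pow_ne_zero 2 hu
  have hexp : (0:ℝ) < Real.exp (β + b*u^2) + 2 := by positivity
  have hA : 0 < Af β b (u^2) := by unfold Af; positivity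
  have hcosh := Real.one_le_cosh (2 * Pf β b k (u^2) * u * x)
  unfold freeEnergyG
  rw [cgf_cosh]
  rw [show 2*(β+b*u^2)*(Kcurve β + k*u^2)*(u*x) = 2*Pf β b k (u^2)*u*x by unfold Pf; ring]
  rw [show (2/(Real.exp (β+b*u^2)+2)) = Af β b (u^2) from rfl]
  rw [log_eq_Tlog (by nlinarith : (-1:ℝ) <
      Af β b (u^2) * (Real.cosh (2*Pf β b k (u^2)*u*x) - 1))]
  rw [cosh_eq_R2 (2*Pf β b k (u^2)*u*x)]
  rw [show Af β b (u^2) * (1 + (2*Pf β b k (u^2)*u*x)^2/2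
        + (2*Pf β b k (u^2)*u*x)^4 * R2 (2*Pf β b k (u^2)*u*x) - 1)
      = u^2 * Wf β b k u x by unfold Wf; ring]
  unfold Hfun Qt
  rw [if_neg hε]
  unfold Wf Qf Pf
  field_simp
  ring

lemma key2 (β b k x : ℝ) (hβ : β ≠ 0) :
    Hfun β b k 0 x = β * (deriv Kcurve β * b - k) * x^2 + c4coef β * x^4 := by
  have hexp : (0:ℝ) < Real.exp β + 2 := by positivity
  unfold Hfun Wf Af Pf Qt Kcurve c4coef
  norm_num [R2_zero, Tlog_zero]
  field_simp
  ring

lemma Kcurve_deriv (β : ℝ) (hβ : β ≠ 0) :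
    deriv Kcurve β = (Real.exp β * (4*β) - (Real.exp β + 2)*4)/(4*β)^2 := by
  have h1 : HasDerivAt (fun x => Real.exp x + 2) (Real.exp β) β :=
    (Real.hasDerivAt_exp β).add_const 2
  have h2 : HasDerivAt (fun x : ℝ => 4*x) 4 β := by
    simpa using (hasDerivAt_id β).const_mul 4
  have h3 : HasDerivAt Kcurve ((Real.exp β * (4*β) - (Real.exp β + 2)*4)/(4*β)^2) β :=
    h1.div h2 (by simpa using hβ)
  exact h3.deriv

lemma Qf_zero (β b k : ℝ) (hβ : β ≠ 0) : Qf β b k 0 = 0 := by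
  have hexp : (0:ℝ) < Real.exp β + 2 := by positivity
  unfold Qf Pf Af Kcurve
  norm_num
  field_simp
  ring

lemma Qf_hasDeriv (β b k : ℝ) (hβ : β ≠ 0) :
    HasDerivAt (Qf β b k) (β * (deriv Kcurve β * b - k)) 0 := by
  have hexp : (0:ℝ) < Real.exp β + 2 := by positivity
  have h1 : HasDerivAt (fun ε : ℝ => β + b*ε) b 0 := by
    simpa using ((hasDerivAt_id (0:ℝ)).const_mul b).const_add β
  have h2 : HasDerivAt (fun ε : ℝ => Kcurve β + k*ε) k 0 := by
    simpa using ((hasDerivAt_id (0:ℝ)).const_mul k).const_add (Kcurve β)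
  have hP : HasDerivAt (Pf β b k) (b * Kcurve β + β * k) 0 := by
    have := h1.mul h2
    simp only [mul_zero, add_zero] at this
    exact this
  have hE : HasDerivAt (fun ε : ℝ => Real.exp (β + b*ε) + 2) (Real.exp β * b) 0 := by
    have := ((Real.hasDerivAt_exp (β + b*0)).comp 0 h1).add_const 2
    simpa using this
  have hA : HasDerivAt (Af β b)
      ((0 * (Real.exp β + 2) - 2 * (Real.exp β * b))/(Real.exp β + 2)^2) 0 := by
    have h := (hasDerivAt_const (0:ℝ) (2:ℝ)).div hE (by norm_num; positivity)
    simp only [mul_zero, add_zero] at h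
    exact h
  have hQ := hP.sub (((hA.const_mul 2).mul (hP.pow 2)))
  have hval : Pf β b k 0 = β * Kcurve β := by simp [Pf]
  have hAval : Af β b 0 = 2/(Real.exp β + 2) := by simp [Af]
  change HasDerivAt (Qf β b k) _ 0 at hQ
  convert hQ using 1
  simp only [Pi.pow_apply]
  norm_num
  rw [hval, hAval, Kcurve_deriv β hβ]
  unfold Kcurve
  field_simp
  ring


lemma exp_add_two_ne (y : ℝ) : Real.exp y + 2 ≠ 0 := by positivity

lemma Pf_continuous (β b k : ℝ) : Continuous (Pf β b k) := by
  unfold Pf; fun_prop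

lemma Af_continuous (β b : ℝ) : Continuous (Af β b) := by
  unfold Af
  exact continuous_const.div
    ((Real.continuous_exp.comp (continuous_const.add (continuous_const.mul continuous_id))).add
      continuous_const)
    (fun x => exp_add_two_ne _)

lemma Qt_continuousAt (β b k : ℝ) (hβ : β ≠ 0) (ε : ℝ) :
    ContinuousAt (Qt β b k) ε := by
  rcases eq_or_ne ε 0 with rfl | hε
  · have hd := Qf_hasDeriv β b k hβ
    have hslope : Tendsto (slope (Qf β b k) 0) (𝓝[≠] 0)
        (𝓝 (β * (deriv Kcurve β * b - k))) :=
      hasDerivAt_iff_tendsto_slope.mp hd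
    have hcongr : Tendsto (Qt β b k) (𝓝[≠] 0) (𝓝 (β * (deriv Kcurve β * b - k))) := by
      apply hslope.congr'
      filter_upwards [self_mem_nhdsWithin] with v hv
      simp only [Set.mem_compl_iff, Set.mem_singleton_iff] at hv
      unfold Qt
      rw [if_neg hv, slope_def_field, Qf_zero β b k hβ]
      simp [div_eq_mul_inv]
    rw [ContinuousAt, show Qt β b k 0 = β * (deriv Kcurve β * b - k) from if_pos rfl]
    rw [← nhdsNE_sup_pure (0:ℝ), tendsto_sup]
    refine ⟨hcongr, ?_⟩
    rw [← show Qt β b k 0 = β * (deriv Kcurve β * b - k) from if_pos rfl]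
    exact tendsto_pure_nhds _ _
  · have hev : (fun v => Qf β b k v / v) =ᶠ[𝓝 ε] Qt β b k := by
      filter_upwards [isOpen_compl_singleton.mem_nhds hε] with v hv
      simp only [Set.mem_compl_iff, Set.mem_singleton_iff] at hv
      unfold Qt; rw [if_neg hv]
    apply ContinuousAt.congr ?_ hev
    apply ContinuousAt.div ?_ continuousAt_id hε
    exact ((Pf_continuous β b k).sub ((continuous_const.mul (Af_continuous β b)).mul
      ((Pf_continuous β b k).pow 2))).continuousAt

lemma Wf_nonneg (β b k u x : ℝ) : 0 ≤ Wf β b k u x := by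
  unfold Wf Af
  apply mul_nonneg
  · positivity
  · apply add_nonneg
    · positivity
    · apply mul_nonneg (by positivity) (R2_nonneg _)

lemma Hfun_continuous (β b k : ℝ) (hβ : β ≠ 0) :
    Continuous (fun p : ℝ × ℝ => Hfun β b k p.1 p.2) := by
  have cP : Continuous (fun p : ℝ × ℝ => Pf β b k (p.1^2)) :=
    (Pf_continuous β b k).comp (continuous_fst.pow 2)
  have cA : Continuous (fun p : ℝ × ℝ => Af β b (p.1^2)) :=
    (Af_continuous β b).comp (continuous_fst.pow 2)
  have cR : Continuous (fun p : ℝ × ℝ => R2 (2 * Pf β b k (p.1^2) * p.1 * p.2)) :=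
    continuous_R2.comp (((continuous_const.mul cP).mul continuous_fst).mul continuous_snd)
  have cW : Continuous (fun p : ℝ × ℝ => Wf β b k p.1 p.2) := by
    unfold Wf
    exact cA.mul (((continuous_const.mul (cP.pow 2)).mul (continuous_snd.pow 2)).add
      ((((continuous_const.mul (cP.pow 4)).mul (continuous_fst.pow 2)).mul
        (continuous_snd.pow 4)).mul cR))
  rw [continuous_iff_continuousAt]
  intro p
  have csq : ContinuousAt (fun q : ℝ × ℝ => q.1^2) p := (continuous_fst.pow 2).continuousAt
  have cQ : ContinuousAt (fun p : ℝ × ℝ => Qt β b k (p.1^2)) p :=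
    ContinuousAt.comp (g := Qt β b k) (f := fun q : ℝ × ℝ => q.1^2) (x := p)
      (Qt_continuousAt β b k hβ (p.1^2)) csq
  have cT : ContinuousAt (fun p : ℝ × ℝ => Tlog (p.1^2 * Wf β b k p.1 p.2)) p := by
    apply (Tlog_continuousAt ?_).comp ((continuous_fst.pow 2).mul cW).continuousAt
    exact mul_nonneg (sq_nonneg _) (Wf_nonneg β b k p.1 p.2)
  unfold Hfun
  exact (((continuous_snd.pow 2).continuousAt.mul cQ).sub
    ((cA.mul (((continuous_const.mul cP).mul continuous_snd).pow 4)).continuousAt.mul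
      cR.continuousAt)).add ((cW.pow 2).continuousAt.mul cT)

lemma unif_of_cont {F : ℝ × ℝ → ℝ} (hF : Continuous F) {C : Set ℝ} (hC : IsCompact C)
    {u : ℕ → ℝ} (hu : Tendsto u atTop (𝓝 0)) :
    TendstoUniformlyOn (fun n x => F (u n, x)) (fun x => F (0, x)) atTop C := by
  rw [Metric.tendstoUniformlyOn_iff]
  intro ε hε
  have hK : IsCompact ((Set.Icc (-1:ℝ) 1) ×ˢ C) := isCompact_Icc.prod hC
  have hUC := hK.uniformContinuousOn_of_continuous hF.continuousOn
  rw [Metric.uniformContinuousOn_iff] at hUC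
  obtain ⟨δ, hδ, hball⟩ := hUC ε hε
  have hev : ∀ᶠ n in atTop, |u n| < min δ 1 := by
    have h := Metric.tendsto_nhds.mp hu (min δ 1) (lt_min hδ one_pos)
    simpa [Real.dist_eq] using h
  filter_upwards [hev] with n hn x hx
  have h1 : |u n| ≤ 1 := le_of_lt (lt_of_lt_of_le hn (min_le_right _ _))
  have hm1 : (u n, x) ∈ (Set.Icc (-1:ℝ) 1) ×ˢ C :=
    ⟨Set.mem_Icc.mpr (abs_le.mp h1), hx⟩
  have hm2 : ((0:ℝ), x) ∈ (Set.Icc (-1:ℝ) 1) ×ˢ C :=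
    ⟨Set.mem_Icc.mpr ⟨by norm_num, by norm_num⟩, hx⟩
  have hd : dist ((u n, x) : ℝ × ℝ) ((0:ℝ), x) < δ := by
    rw [Prod.dist_eq]
    simp only [dist_self, Real.dist_eq, sub_zero]
    exact max_lt (lt_of_lt_of_le hn (min_le_left _ _)) hδ
  rw [dist_comm]
  exact hball _ hm1 _ hm2 hd

/-- uniform convergence of scaled free-energy functionals to the
Ginzburg--Landau polynomial near a second-order point, for the sequence
`β_n = β + b/n^α`, `K_n = K(β) + k/n^α`. -/
theorem stmt0 (β α b k : ℝ) (hβ0 : 0 < β) (hβ : β < Real.log 4) (hα : 0 < α)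
    (hb : b = 1 ∨ b = 0 ∨ b = -1) (hk : k ≠ deriv Kcurve β * b) :
    ∀ C : Set ℝ, IsCompact C →
      TendstoUniformlyOn
        (fun (n : ℕ) (x : ℝ) =>
          (n : ℝ) ^ (2 * α) *
            freeEnergyG (β + b / (n : ℝ) ^ α) (Kcurve β + k / (n : ℝ) ^ α)
              (x / (n : ℝ) ^ (α / 2)))
        (fun x : ℝ => β * (deriv Kcurve β * b - k) * x ^ 2 + c4coef β * x ^ 4)
        atTop C := by
  intro C hC
  have hβ' : β ≠ 0 := ne_of_gt hβ0
  set u : ℕ → ℝ := fun n => (((n:ℝ)) ^ (α/2))⁻¹ with hu_def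
  have hu : Tendsto u atTop (𝓝 0) := by
    apply Tendsto.inv_tendsto_atTop
    exact (tendsto_rpow_atTop (by positivity)).comp tendsto_natCast_atTop_atTop
  have base := unif_of_cont (Hfun_continuous β b k hβ') hC hu
  have hlim : (fun x : ℝ => Hfun β b k 0 x)
      = (fun x : ℝ => β * (deriv Kcurve β * b - k) * x ^ 2 + c4coef β * x ^ 4) :=
    funext (fun x => key2 β b k x hβ')
  rw [show (fun x : ℝ => (fun p : ℝ × ℝ => Hfun β b k p.1 p.2) (0, x))
      = (fun x : ℝ => Hfun β b k 0 x) from rfl, hlim] at base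
  apply base.congr
  filter_upwards [eventually_ge_atTop 1] with n hn
  intro x hx
  have hN : (0:ℝ) < (n:ℝ) := by exact_mod_cast hn
  have hr2 : (0:ℝ) < ((n:ℝ)) ^ (α/2) := Real.rpow_pos_of_pos hN _
  have hun : u n ≠ 0 := inv_ne_zero (ne_of_gt hr2)
  have hsq : (u n)^2 = ((n:ℝ) ^ α)⁻¹ := by
    show (((n:ℝ) ^ (α/2))⁻¹)^2 = ((n:ℝ) ^ α)⁻¹
    rw [inv_pow, ← Real.rpow_natCast ((n:ℝ) ^ (α/2)) 2, ← Real.rpow_mul hN.le]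
    norm_num
  have h4 : (u n)^4 = ((n:ℝ) ^ (2*α))⁻¹ := by
    show (((n:ℝ) ^ (α/2))⁻¹)^4 = ((n:ℝ) ^ (2*α))⁻¹
    rw [inv_pow, ← Real.rpow_natCast ((n:ℝ) ^ (α/2)) 4, ← Real.rpow_mul hN.le]
    norm_num
    congr 1
    ring
  have hb' : b / (n:ℝ) ^ α = b * (u n)^2 := by rw [hsq, div_eq_mul_inv]
  have hk' : k / (n:ℝ) ^ α = k * (u n)^2 := by rw [hsq, div_eq_mul_inv]
  have hx' : x / (n:ℝ) ^ (α/2) = u n * x := by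
    show x / (n:ℝ) ^ (α/2) = ((n:ℝ) ^ (α/2))⁻¹ * x
    rw [div_eq_mul_inv, mul_comm]
  show Hfun β b k (u n) x
      = (n:ℝ) ^ (2*α) * freeEnergyG (β + b / (n:ℝ) ^ α) (Kcurve β + k / (n:ℝ) ^ α)
          (x / (n:ℝ) ^ (α/2))
  rw [hb', hk', hx', key1 β b k (u n) x hun, ← mul_assoc, h4,
    mul_inv_cancel₀ (ne_of_gt (Real.rpow_pos_of_pos hN _)), one_mul]
end

section
/- Fix α > 0, b ∈ {1, 0, −1}, and k ∈ ℝ with k ≠ K'(β_c)·b, where β_c = log 4. Define β_n = β_c + b/n^α and K_n = K(β_c) + k/n^α. Then as n → ∞, n^{3α/2}·G_{β_n,K_n}(x/n^{α/4}) converges to the Ginzburg–Landau polynomial g(x) = β_c(K'(β_c)b − k)·x² + c₆·x⁶ uniformly for x in every compact subset of ℝ, where c₆ = 9/40. -/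
set_option maxHeartbeats 1000000

open Real Filter Finset Topology

lemma cosh_taylor (y : ℝ) (hy : |y| ≤ 1/2) :
    |Real.cosh (2*y) - (1 + 2*y^2 + (2/3)*y^4 + (4/45)*y^6)| ≤ y^8/140 := by
  have hx1 : |2*y| ≤ 1 := by
    rw [abs_mul]
    norm_num
    linarith [abs_nonneg y]
  have hx2 : |(-(2*y))| ≤ 1 := by rwa [abs_neg]
  have h1 := Real.exp_bound hx1 (n := 8) (by norm_num)
  have h2 := Real.exp_bound hx2 (n := 8) (by norm_num)
  have hs1 : ∑ m ∈ Finset.range 8, (2*y)^m/(m.factorial : ℝ)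
      = 1 + 2*y + 2*y^2 + (4/3)*y^3 + (2/3)*y^4 + (4/15)*y^5 + (4/45)*y^6 + (8/315)*y^7 := by
    simp [Finset.sum_range_succ, Nat.factorial]
    ring
  have hs2 : ∑ m ∈ Finset.range 8, (-(2*y))^m/(m.factorial : ℝ)
      = 1 - 2*y + 2*y^2 - (4/3)*y^3 + (2/3)*y^4 - (4/15)*y^5 + (4/45)*y^6 - (8/315)*y^7 := by
    simp [Finset.sum_range_succ, Nat.factorial]
    ring
  rw [hs1] at h1
  rw [hs2] at h2
  have habs1 : |2*y|^8 = 256*y^8 := by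
    rw [pow_abs, abs_of_nonneg (by positivity)]; ring
  have habs2 : |(-(2*y))|^8 = 256*y^8 := by
    rw [abs_neg, habs1]
  rw [habs1] at h1
  rw [habs2] at h2
  norm_num [Nat.factorial] at h1 h2
  rw [Real.cosh_eq]
  have key := abs_add_le (Real.exp (2*y) - (1 + 2*y + 2*y^2 + (4/3)*y^3 + (2/3)*y^4 + (4/15)*y^5 + (4/45)*y^6 + (8/315)*y^7))
    (Real.exp (-(2*y)) - (1 - 2*y + 2*y^2 - (4/3)*y^3 + (2/3)*y^4 - (4/15)*y^5 + (4/45)*y^6 - (8/315)*y^7))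
  have e1 : (Real.exp (2*y) + Real.exp (-(2*y)))/2 - (1 + 2*y^2 + (2/3)*y^4 + (4/45)*y^6)
      = ((Real.exp (2*y) - (1 + 2*y + 2*y^2 + (4/3)*y^3 + (2/3)*y^4 + (4/15)*y^5 + (4/45)*y^6 + (8/315)*y^7))
        + (Real.exp (-(2*y)) - (1 - 2*y + 2*y^2 - (4/3)*y^3 + (2/3)*y^4 - (4/15)*y^5 + (4/45)*y^6 - (8/315)*y^7)))/2 := by
    ring
  rw [e1, abs_div, abs_two]
  linarith

lemma sinh_sq_taylor (y : ℝ) (hy : |y| ≤ 1/2) :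
    |Real.sinh y^2 - (y^2 + y^4/3 + (2/45)*y^6)| ≤ y^8/280 := by
  have h := cosh_taylor y hy
  have hid : Real.sinh y^2 = (Real.cosh (2*y) - 1)/2 := by
    have h1 := Real.cosh_two_mul y
    have h2 := Real.cosh_sq y
    linarith
  rw [hid]
  have e1 : (Real.cosh (2*y) - 1)/2 - (y^2 + y^4/3 + (2/45)*y^6)
      = (Real.cosh (2*y) - (1 + 2*y^2 + (2/3)*y^4 + (4/45)*y^6))/2 := by ring
  rw [e1, abs_div, abs_two]
  linarith

lemma log_taylor (w : ℝ) (h0 : 0 ≤ w) (h1 : w ≤ 1/2) :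
    |Real.log (1+w) - (w - w^2/2 + w^3/3)| ≤ 2*w^4 := by
  have hlt : |(-w)| < 1 := by rw [abs_neg, abs_of_nonneg h0]; linarith
  have h := Real.abs_log_sub_add_sum_range_le hlt 3
  have hsum : (∑ i ∈ Finset.range 3, (-w)^(i+1)/(i+1)) = -w + w^2/2 - w^3/3 := by
    simp [Finset.sum_range_succ]
    ring
  rw [hsum, sub_neg_eq_add, abs_neg, abs_of_nonneg h0] at h
  have e1 : Real.log (1+w) - (w - w^2/2 + w^3/3) = -w + w^2/2 - w^3/3 + Real.log (1+w) := by ring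
  rw [e1]
  refine h.trans ?_
  rw [div_le_iff₀ (by linarith)]
  have : w ^ (3+1) = w^4 := by norm_num
  rw [this]
  nlinarith [pow_nonneg h0 4, pow_nonneg h0 5]

lemma combo_bound (q2 q3 A B Y : ℝ) (h2a : 0 ≤ q2) (h2b : q2 ≤ 1) (h3a : 0 ≤ q3)
    (h3b : q3 ≤ 1) (hA : 0 ≤ A) (hA' : A ≤ Y) (hB : 0 ≤ B) (hB' : B ≤ 2*Y) :
    |(-(2*q2))*A + (8/3)*q3*B| ≤ 8*Y := by
  rw [abs_le]
  constructor <;> nlinarith [mul_le_mul h2b hA' hA (by norm_num : (0:ℝ) ≤ 1),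
    mul_le_mul h3b hB' hB (by norm_num : (0:ℝ) ≤ 1), mul_nonneg h2a hA, mul_nonneg h3a hB]

lemma L4 (p y : ℝ) (hp0 : 0 ≤ p) (hp1 : p ≤ 1) (hy : |y| ≤ 1/4) :
    |Real.log (1 + 2*p*Real.sinh y^2) -
      (2*p*y^2 + (2*p/3 - 2*p^2)*y^4 + (4*p/45 - 4*p^2/3 + 8*p^3/3)*y^6)| ≤ 1000*y^8 := by
  have hy2 : y^2 ≤ 1/16 := by nlinarith [abs_nonneg y, sq_abs y]
  have hy2n : 0 ≤ y^2 := sq_nonneg y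
  have hy8 : 0 ≤ y^8 := by positivity
  have hS00 : 0 ≤ Real.sinh y^2 := sq_nonneg _
  have heb0 := sinh_sq_taylor y (hy.trans (by norm_num))
  obtain ⟨S, hSdef⟩ : ∃ S, Real.sinh y^2 = S := ⟨_, rfl⟩
  rw [hSdef] at heb0 hS00 ⊢
  obtain ⟨P, hPdef⟩ : ∃ P, y^2 + y^4/3 + (2/45)*y^6 = P := ⟨_, rfl⟩
  rw [hPdef] at heb0
  have heb : |S - P| ≤ y^8/280 := heb0
  have he1 : S - P ≤ y^8/280 := (abs_le.mp heb).2
  have he2 : -(y^8/280) ≤ S - P := (abs_le.mp heb).1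
  have hP0 : 0 ≤ P := by rw [← hPdef]; positivity
  have hPle : P ≤ (3/2)*y^2 := by rw [← hPdef]; nlinarith
  have hS0 : 0 ≤ S := hS00
  have hSle : S ≤ 2*y^2 := by nlinarith
  have hw0 : 0 ≤ 2*p*S := by positivity
  have hw4 : 2*p*S ≤ 4*y^2 := by nlinarith
  have hw1 : 2*p*S ≤ 1/2 := by nlinarith
  have hp2 : p^2 ≤ 1 := pow_le_one₀ hp0 hp1
  have hp3 : p^3 ≤ 1 := pow_le_one₀ hp0 hp1
  -- A1
  have hA1 : |Real.log (1+2*p*S) - (2*p*S - (2*p*S)^2/2 + (2*p*S)^3/3)| ≤ 512*y^8 := by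
    refine (log_taylor (2*p*S) hw0 hw1).trans ?_
    have h4 : (2*p*S)^4 ≤ (4*y^2)^4 := pow_le_pow_left₀ hw0 hw4 4
    nlinarith
  -- A2
  have hA2 : |2*p*(S-P)| ≤ y^8 := by
    rw [abs_mul, abs_of_nonneg (by positivity : (0:ℝ) ≤ 2*p)]
    nlinarith [abs_nonneg (S-P)]
  -- A3
  have hA3 : |(-(2*p^2))*((S-P)*(S+P))| ≤ y^8 := by
    rw [abs_mul, abs_neg, abs_of_nonneg (by positivity : (0:ℝ) ≤ 2*p^2)]
    have hsum : S + P ≤ 4*y^2 := by linarith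
    have hmm : |(S-P)*(S+P)| ≤ (y^8/280)*(4*y^2) := by
      rw [abs_mul, abs_of_nonneg (by positivity : (0:ℝ) ≤ S+P)]
      exact mul_le_mul heb hsum (by positivity) (by positivity)
    have h2p : 2*p^2*|(S-P)*(S+P)| ≤ 2*((y^8/280)*(4*y^2)) := by
      have := abs_nonneg ((S-P)*(S+P))
      nlinarith
    nlinarith
  -- A4
  have hA4 : |(8/3)*p^3*((S-P)*(S^2+S*P+P^2))| ≤ y^8 := by
    rw [abs_mul, abs_of_nonneg (by positivity : (0:ℝ) ≤ (8/3)*p^3)]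
    have hq : S^2+S*P+P^2 ≤ 12*y^4 := by nlinarith
    have hmm : |(S-P)*(S^2+S*P+P^2)| ≤ (y^8/280)*(12*y^4) := by
      rw [abs_mul, abs_of_nonneg (by positivity : (0:ℝ) ≤ S^2+S*P+P^2)]
      exact mul_le_mul heb hq (by positivity) (by positivity)
    have h2p : (8/3)*p^3*|(S-P)*(S^2+S*P+P^2)| ≤ (8/3)*((y^8/280)*(12*y^4)) := by
      have := abs_nonneg ((S-P)*(S^2+S*P+P^2))
      nlinarith
    nlinarith
  -- A5
  have h10 : y^10 ≤ y^8/16 := by nlinarith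
  have h12 : y^12 ≤ y^8/256 := by nlinarith
  have h14 : y^14 ≤ y^8/4096 := by nlinarith
  have h16 : y^16 ≤ y^8/65536 := by nlinarith
  have h18 : y^18 ≤ y^8/1048576 := by nlinarith
  have hy10 : 0 ≤ y^10 := by positivity
  have hy12 : 0 ≤ y^12 := by positivity
  have hy14 : 0 ≤ y^14 := by positivity
  have hy16 : 0 ≤ y^16 := by positivity
  have hy18 : 0 ≤ y^18 := by positivity
  have hQ1 : P^2 - y^4 - (2/3)*y^6 = (1/5)*y^8 + (4/135)*y^10 + (4/2025)*y^12 := by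
    rw [← hPdef]; ring
  have hQ1a : 0 ≤ P^2 - y^4 - (2/3)*y^6 := by rw [hQ1]; linarith
  have hQ1b : P^2 - y^4 - (2/3)*y^6 ≤ y^8 := by rw [hQ1]; linarith
  have hQ2 : P^3 - y^6 = y^8 + (7/15)*y^10 + (17/135)*y^12 + (14/675)*y^14
      + (4/2025)*y^16 + (8/91125)*y^18 := by
    rw [← hPdef]; ring
  have hQ2a : 0 ≤ P^3 - y^6 := by rw [hQ2]; linarith
  have hQ2b : P^3 - y^6 ≤ 2*y^8 := by rw [hQ2]; linarith
  have hA5 : |2*p*P - 2*p^2*P^2 + (8/3)*p^3*P^3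
      - (2*p*y^2 + (2*p/3 - 2*p^2)*y^4 + (4*p/45 - 4*p^2/3 + 8*p^3/3)*y^6)| ≤ 8*y^8 := by
    have hid : 2*p*P - 2*p^2*P^2 + (8/3)*p^3*P^3
        - (2*p*y^2 + (2*p/3 - 2*p^2)*y^4 + (4*p/45 - 4*p^2/3 + 8*p^3/3)*y^6)
        = (-(2*p^2))*(P^2 - y^4 - (2/3)*y^6) + (8/3)*p^3*(P^3 - y^6) := by
      rw [← hPdef]; ring
    rw [hid]
    exact combo_bound (p^2) (p^3) _ _ (y^8) (by positivity) hp2 (by positivity) hp3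
      hQ1a hQ1b hQ2a hQ2b
  -- combine
  have hsplit : Real.log (1+2*p*S)
      - (2*p*y^2 + (2*p/3 - 2*p^2)*y^4 + (4*p/45 - 4*p^2/3 + 8*p^3/3)*y^6)
      = (Real.log (1+2*p*S) - (2*p*S - (2*p*S)^2/2 + (2*p*S)^3/3))
        + (2*p*(S-P))
        + ((-(2*p^2))*((S-P)*(S+P)))
        + ((8/3)*p^3*((S-P)*(S^2+S*P+P^2)))
        + (2*p*P - 2*p^2*P^2 + (8/3)*p^3*P^3
          - (2*p*y^2 + (2*p/3 - 2*p^2)*y^4 + (4*p/45 - 4*p^2/3 + 8*p^3/3)*y^6)) := by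
    ring
  rw [hsplit]
  have i1 := abs_add_le
    ((Real.log (1+2*p*S) - (2*p*S - (2*p*S)^2/2 + (2*p*S)^3/3))
      + (2*p*(S-P)) + ((-(2*p^2))*((S-P)*(S+P)))
      + ((8/3)*p^3*((S-P)*(S^2+S*P+P^2))))
    (2*p*P - 2*p^2*P^2 + (8/3)*p^3*P^3
      - (2*p*y^2 + (2*p/3 - 2*p^2)*y^4 + (4*p/45 - 4*p^2/3 + 8*p^3/3)*y^6))
  have i2 := abs_add_le
    ((Real.log (1+2*p*S) - (2*p*S - (2*p*S)^2/2 + (2*p*S)^3/3))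
      + (2*p*(S-P)) + ((-(2*p^2))*((S-P)*(S+P))))
    ((8/3)*p^3*((S-P)*(S^2+S*P+P^2)))
  have i3 := abs_add_le
    ((Real.log (1+2*p*S) - (2*p*S - (2*p*S)^2/2 + (2*p*S)^3/3)) + (2*p*(S-P)))
    ((-(2*p^2))*((S-P)*(S+P)))
  have i4 := abs_add_le
    (Real.log (1+2*p*S) - (2*p*S - (2*p*S)^2/2 + (2*p*S)^3/3))
    (2*p*(S-P))
  linarith

lemma cgf_eq (β s : ℝ) :
    cgf β (2*s) = Real.log (1 + 2*(2/(Real.exp β + 2))*Real.sinh s^2) := by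
  unfold cgf
  congr 1
  have hc : Real.exp (2*s) + Real.exp (-(2*s)) = 2*(2*Real.sinh s^2 + 1) := by
    have h1 := Real.cosh_two_mul s
    have h2 := Real.cosh_sq s
    have h3 := Real.cosh_eq (2*s)
    nlinarith [h1, h2, h3]
  rw [hc]
  have he : Real.exp (-β) = (Real.exp β)⁻¹ := Real.exp_neg β
  have h1 : Real.exp β > 0 := Real.exp_pos β
  have h2 : (1:ℝ) + 2*Real.exp (-β) > 0 := by positivity
  rw [he]
  field_simp
  ring

lemma master (β K t x : ℝ) (ht : 0 < t) (hy : |β * K * x / t| ≤ 1/4) :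
    |t^6 * freeEnergyG β K (x/t) -
      ((β*K*(1 - 2*(2/(Real.exp β + 2))*(β*K))*t^4) * x^2
        + (-(2*(2/(Real.exp β+2))/3 - 2*(2/(Real.exp β+2))^2)*(β*K)^4*t^2) * x^4
        + (-(4*(2/(Real.exp β+2))/45 - 4*(2/(Real.exp β+2))^2/3 + 8*(2/(Real.exp β+2))^3/3)*(β*K)^6) * x^6)|
      ≤ 1000*(β*K)^8*x^8/t^2 := by
  have hE : 0 < Real.exp β := Real.exp_pos β
  have hp0 : 0 ≤ 2/(Real.exp β + 2) := by positivity
  have hp1 : 2/(Real.exp β + 2) ≤ 1 := by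
    rw [div_le_one (by positivity)]; linarith
  have hcgf : cgf β (2 * β * K * (x/t))
      = Real.log (1 + 2*(2/(Real.exp β + 2))*Real.sinh (β*K*x/t)^2) := by
    have h2 : 2 * β * K * (x/t) = 2*(β*K*x/t) := by ring
    rw [h2, cgf_eq]
  have hL := L4 (2/(Real.exp β + 2)) (β*K*x/t) hp0 hp1 hy
  unfold freeEnergyG
  rw [hcgf]
  set p := 2/(Real.exp β + 2) with hpdef
  set y := β*K*x/t with hydef
  set L := Real.log (1 + 2*p*Real.sinh y^2) with hLdef
  set T := 2*p*y^2 + (2*p/3 - 2*p^2)*y^4 + (4*p/45 - 4*p^2/3 + 8*p^3/3)*y^6 with hTdef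
  have hkey : t^6 * (β*K*(x/t)^2 - L)
      - ((β*K*(1 - 2*p*(β*K))*t^4) * x^2
        + (-(2*p/3 - 2*p^2)*(β*K)^4*t^2) * x^4
        + (-(4*p/45 - 4*p^2/3 + 8*p^3/3)*(β*K)^6) * x^6)
      = t^6 * (T - L) := by
    rw [hTdef, hydef]
    field_simp
    ring
  rw [hkey]
  have h1 : |t^6 * (T - L)| = t^6 * |L - T| := by
    rw [abs_mul, abs_of_nonneg (by positivity : (0:ℝ) ≤ t^6), abs_sub_comm]
  rw [h1]
  have h2 : t^6 * |L - T| ≤ t^6 * (1000*y^8) := by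
    have := pow_nonneg ht.le 6
    exact mul_le_mul_of_nonneg_left hL this
  refine h2.trans (le_of_eq ?_)
  rw [hydef]
  field_simp

lemma abs4 (a b c d x : ℝ) :
    |(-a)*x^2 + (-b)*x^4 + (-c)*x^6 + d| ≤ |a| *x^2 + |b| *x^4 + |c| *x^6 + |d| := by
  have h1 := abs_add_le ((-a)*x^2 + (-b)*x^4 + (-c)*x^6) d
  have h2 := abs_add_le ((-a)*x^2 + (-b)*x^4) ((-c)*x^6)
  have h3 := abs_add_le ((-a)*x^2) ((-b)*x^4)
  have e1 : |(-a)*x^2| = |a| *x^2 := by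
    rw [abs_mul, abs_neg, abs_of_nonneg (by positivity : (0:ℝ) ≤ x^2)]
  have e2 : |(-b)*x^4| = |b| *x^4 := by
    rw [abs_mul, abs_neg, abs_of_nonneg (by positivity : (0:ℝ) ≤ x^4)]
  have e3 : |(-c)*x^6| = |c| *x^6 := by
    rw [abs_mul, abs_neg, abs_of_nonneg (by positivity : (0:ℝ) ≤ x^6)]
  linarith

/-- uniform convergence of scaled free-energy functionals to the
degree-6 Ginzburg--Landau polynomial for a sequence converging to the
tricritical point along a ray. -/
theorem stmt4 (α b k : ℝ) (hα : 0 < α) (hb : b = 1 ∨ b = 0 ∨ b = -1)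
    (hk : k ≠ deriv Kcurve (Real.log 4) * b) :
    ∀ C : Set ℝ, IsCompact C →
      TendstoUniformlyOn
        (fun (n : ℕ) (x : ℝ) =>
          (n : ℝ) ^ (3 * α / 2) *
            freeEnergyG (Real.log 4 + b / (n : ℝ) ^ α)
              (Kcurve (Real.log 4) + k / (n : ℝ) ^ α)
              (x / (n : ℝ) ^ (α / 4)))
        (fun x : ℝ =>
          Real.log 4 * (deriv Kcurve (Real.log 4) * b - k) * x ^ 2 + (9 / 40) * x ^ 6)
        atTop C := by
  intro C hC
  have hb1 : |b| ≤ 1 := by rcases hb with h|h|h <;> rw [h] <;> norm_num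
  obtain ⟨R, hR0, hCR⟩ : ∃ R : ℝ, 0 < R ∧ ∀ x ∈ C, |x| ≤ R := by
    obtain ⟨R, hR⟩ := hC.isBounded.subset_closedBall 0
    refine ⟨|R| + 1, by positivity, fun x hx => ?_⟩
    have h1 := hR hx
    rw [Metric.mem_closedBall, Real.dist_eq, sub_zero] at h1
    calc |x| ≤ R := h1
      _ ≤ |R| + 1 := by linarith [le_abs_self R]
  have hbc4 : Real.exp (Real.log 4) = 4 := Real.exp_log (by norm_num)
  have hbcpos : 0 < Real.log 4 := Real.log_pos (by norm_num)
  -- basic limits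
  have hna : Tendsto (fun n : ℕ => (n:ℝ)^α) atTop atTop :=
    (tendsto_rpow_atTop hα).comp tendsto_natCast_atTop_atTop
  have ht : Tendsto (fun n : ℕ => (n:ℝ)^(α/4)) atTop atTop :=
    (tendsto_rpow_atTop (by linarith)).comp tendsto_natCast_atTop_atTop
  have hdiv : ∀ c : ℝ, Tendsto (fun n : ℕ => c/(n:ℝ)^α) atTop (𝓝 0) := by
    intro c
    have h2 := hna.inv_tendsto_atTop.const_mul c
    rw [mul_zero] at h2
    exact h2.congr (fun n => (div_eq_mul_inv c _).symm)
  have hβt : Tendsto (fun n : ℕ => Real.log 4 + b/(n:ℝ)^α) atTop (𝓝 (Real.log 4)) := by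
    simpa using (hdiv b).const_add (Real.log 4)
  have hKt : Tendsto (fun n : ℕ => Kcurve (Real.log 4) + k/(n:ℝ)^α) atTop
      (𝓝 (Kcurve (Real.log 4))) := by
    simpa using (hdiv k).const_add (Kcurve (Real.log 4))
  have hut : Tendsto (fun n : ℕ => (Real.log 4 + b/(n:ℝ)^α) * (Kcurve (Real.log 4) + k/(n:ℝ)^α))
      atTop (𝓝 (3/2)) := by
    have h := hβt.mul hKt
    have hval : Real.log 4 * Kcurve (Real.log 4) = 3/2 := by
      unfold Kcurve
      rw [hbc4]
      field_simp
      ring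
    rwa [hval] at h
  have hEt : Tendsto (fun n : ℕ => Real.exp (Real.log 4 + b/(n:ℝ)^α)) atTop (𝓝 4) := by
    have h := (Real.continuous_exp.tendsto (Real.log 4)).comp hβt
    rwa [hbc4] at h
  have hpt : Tendsto (fun n : ℕ => 2/(Real.exp (Real.log 4 + b/(n:ℝ)^α) + 2)) atTop (𝓝 (1/3)) := by
    have h := Tendsto.div (tendsto_const_nhds (x := (2:ℝ))) (hEt.add_const 2)
      (by norm_num : (4:ℝ)+2 ≠ 0)
    have : (2:ℝ)/(4+2) = 1/3 := by norm_num
    rwa [this] at h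
  -- rpow identities
  have hrp : ∀ (n : ℕ) (m : ℕ), ((n:ℝ)^(α/4))^(m:ℕ) = (n:ℝ)^(α/4 * m) := by
    intro n m
    rw [← Real.rpow_natCast ((n:ℝ)^(α/4)) m, ← Real.rpow_mul (Nat.cast_nonneg n)]
  have r4 : ∀ n : ℕ, ((n:ℝ)^(α/4))^(4:ℕ) = (n:ℝ)^α := by
    intro n; rw [hrp n 4]; norm_num
  have r2 : ∀ n : ℕ, ((n:ℝ)^(α/4))^(2:ℕ) = (n:ℝ)^(α/2) := by
    intro n; rw [hrp n 2]; congr 1; push_cast; ring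
  have r6 : ∀ n : ℕ, ((n:ℝ)^(α/4))^(6:ℕ) = (n:ℝ)^(3*α/2) := by
    intro n; rw [hrp n 6]; congr 1; push_cast; ring
  -- eventual facts
  have evna1 : ∀ᶠ n : ℕ in atTop, 1 ≤ (n:ℝ)^α := hna.eventually_ge_atTop 1
  have evβ : ∀ᶠ n : ℕ in atTop, 0 < Real.log 4 + b/(n:ℝ)^α :=
    hβt.eventually (eventually_gt_nhds hbcpos)
  -- the F limit
  have hF : Tendsto (fun n : ℕ => (n:ℝ)^α * (Kcurve (Real.log 4 + b/(n:ℝ)^α)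
      - (Kcurve (Real.log 4) + k/(n:ℝ)^α))) atTop (𝓝 (deriv Kcurve (Real.log 4) * b - k)) := by
    rcases eq_or_ne b 0 with hb0 | hb0
    · have hev : (fun _ : ℕ => -k) =ᶠ[atTop] (fun n : ℕ => (n:ℝ)^α * (Kcurve (Real.log 4 + b/(n:ℝ)^α)
          - (Kcurve (Real.log 4) + k/(n:ℝ)^α))) := by
        filter_upwards [evna1] with n hn
        have hne : (n:ℝ)^α ≠ 0 := by linarith
        rw [hb0]
        rw [zero_div, add_zero]
        field_simp
        ring
      have h := Tendsto.congr' hev (tendsto_const_nhds (x := -k))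
      have hval : deriv Kcurve (Real.log 4) * b - k = -k := by rw [hb0]; ring
      rw [hval]
      exact h
    · have hdiff : DifferentiableAt ℝ Kcurve (Real.log 4) := by
        have h : DifferentiableAt ℝ (fun β : ℝ => (Real.exp β + 2)/(4*β)) (Real.log 4) := by
          apply DifferentiableAt.div
          · exact (Real.differentiable_exp.differentiableAt).add_const 2
          · exact (differentiableAt_const 4).mul differentiableAt_id
          · have : (0:ℝ) < 4 * Real.log 4 := by linarith
            exact ne_of_gt this
        exact h
      have hsl := hasDerivAt_iff_tendsto_slope.mp hdiff.hasDerivAt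
      have hβmem : Tendsto (fun n : ℕ => Real.log 4 + b/(n:ℝ)^α) atTop (𝓝[≠] Real.log 4) := by
        rw [tendsto_nhdsWithin_iff]
        refine ⟨hβt, ?_⟩
        filter_upwards [evna1] with n hn
        have hpow : (0:ℝ) < (n:ℝ)^α := by linarith
        simp only [Set.mem_compl_iff, Set.mem_singleton_iff]
        intro hcon
        have : b/(n:ℝ)^α = 0 := by linarith [hcon]
        rw [div_eq_zero_iff] at this
        rcases this with h|h
        · exact hb0 h
        · exact (ne_of_gt hpow) h
      have hcomp := hsl.comp hβmem
      have h := (hcomp.const_mul b).sub_const k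
      have hev : (fun n : ℕ => b * slope Kcurve (Real.log 4) (Real.log 4 + b/(n:ℝ)^α) - k)
          =ᶠ[atTop] (fun n : ℕ => (n:ℝ)^α * (Kcurve (Real.log 4 + b/(n:ℝ)^α)
          - (Kcurve (Real.log 4) + k/(n:ℝ)^α))) := by
        filter_upwards [evna1] with n hn
        have hpow : (0:ℝ) < (n:ℝ)^α := by linarith
        rw [slope_def_field]
        have hd : Real.log 4 + b/(n:ℝ)^α - Real.log 4 = b/(n:ℝ)^α := by ring
        rw [hd]
        field_simp
        ring
      have h2 := Tendsto.congr' hev h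
      have hval : deriv Kcurve (Real.log 4) * b - k = b * deriv Kcurve (Real.log 4) - k := by ring
      rwa [hval]
  -- prefactor limit
  have hpre : Tendsto (fun n : ℕ =>
      ((Real.log 4 + b/(n:ℝ)^α) * (Kcurve (Real.log 4) + k/(n:ℝ)^α) * 4 * (Real.log 4 + b/(n:ℝ)^α))
        / (Real.exp (Real.log 4 + b/(n:ℝ)^α) + 2)) atTop (𝓝 (Real.log 4)) := by
    have h := ((hut.mul_const 4).mul hβt).div (hEt.add_const 2) (by norm_num : (4:ℝ)+2 ≠ 0)
    have hval : (3/2*4*Real.log 4)/(4+2) = Real.log 4 := by ring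
    rwa [hval] at h
  -- A limit
  have hAt : Tendsto (fun n : ℕ =>
      (Real.log 4 + b/(n:ℝ)^α) * (Kcurve (Real.log 4) + k/(n:ℝ)^α)
        * (1 - 2*(2/(Real.exp (Real.log 4 + b/(n:ℝ)^α) + 2))
            *((Real.log 4 + b/(n:ℝ)^α) * (Kcurve (Real.log 4) + k/(n:ℝ)^α)))
        * ((n:ℝ)^(α/4))^4
      - Real.log 4 * (deriv Kcurve (Real.log 4) * b - k)) atTop (𝓝 0) := by
    have h := (hpre.mul hF).sub_const (Real.log 4 * (deriv Kcurve (Real.log 4) * b - k))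
    rw [sub_self] at h
    refine Tendsto.congr' ?_ h
    filter_upwards [evna1, evβ] with n h1 h2
    have hpow : (0:ℝ) < (n:ℝ)^α := by linarith
    have hEpos : (0:ℝ) < Real.exp (Real.log 4 + b/(n:ℝ)^α) := Real.exp_pos _
    have hKc : Kcurve (Real.log 4 + b/(n:ℝ)^α)
        = (Real.exp (Real.log 4 + b/(n:ℝ)^α) + 2)/(4*(Real.log 4 + b/(n:ℝ)^α)) := rfl
    rw [r4 n, hKc]
    generalize hE : Real.exp (Real.log 4 + b/(n:ℝ)^α) = E at hEpos ⊢
    generalize hBV : Real.log 4 + b/(n:ℝ)^α = BV at h2 ⊢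
    generalize hN : (n:ℝ)^α = N at hpow ⊢
    have h3 : BV ≠ 0 := ne_of_gt h2
    have h4 : E + 2 ≠ 0 := by linarith
    have h5 : N ≠ 0 := ne_of_gt hpow
    field_simp
    ring
  -- B limit
  have ht2 : Tendsto (fun n : ℕ => ((n:ℝ)^(α/4))^(2:ℕ)) atTop atTop := by
    have h := (tendsto_rpow_atTop (by linarith : 0 < α/2)).comp
      (tendsto_natCast_atTop_atTop (R := ℝ))
    exact Tendsto.congr (fun n => (r2 n).symm) h
  have hz : Tendsto (fun n : ℕ => ((n:ℝ)^(α/4))^(2:ℕ)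
      * (1/3 - 2/(Real.exp (Real.log 4 + b/(n:ℝ)^α) + 2))) atTop (𝓝 0) := by
    apply squeeze_zero_norm' (a := fun n : ℕ => 2 * (((n:ℝ)^(α/4))^(2:ℕ))⁻¹)
    · filter_upwards [evna1] with n hn
      have hpow : (0:ℝ) < (n:ℝ)^α := by linarith
      have hn0 : (0:ℝ) < (n:ℝ) := by
        rcases (Nat.cast_nonneg n : (0:ℝ) ≤ n).lt_or_eq with h|h
        · exact h
        · exfalso
          rw [← h, Real.zero_rpow (ne_of_gt hα)] at hn
          linarith
      have ht2pos : (0:ℝ) < ((n:ℝ)^(α/4))^(2:ℕ) :=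
        pow_pos (Real.rpow_pos_of_pos hn0 _) 2
      set E := Real.exp (Real.log 4 + b/(n:ℝ)^α) with hEd
      have hEpos : (0:ℝ) < E := Real.exp_pos _
      set T := ((n:ℝ)^(α/4))^(2:ℕ) with hTd
      have hT4 : (n:ℝ)^α = T^2 := by rw [hTd, ← r4 n]; ring
      have hEv : E = 4 * Real.exp (b/(n:ℝ)^α) := by rw [hEd, Real.exp_add, hbc4]
      have hdle : |b/(n:ℝ)^α| ≤ 1/(n:ℝ)^α := by
        rw [abs_div, abs_of_pos hpow]
        exact (div_le_div_iff_of_pos_right hpow).mpr hb1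
      have hd1 : |b/(n:ℝ)^α| ≤ 1 := hdle.trans (by rw [div_le_one hpow]; exact hn)
      have hexp1 := Real.abs_exp_sub_one_le hd1
      have hE4 : |E - 4| ≤ 8/(n:ℝ)^α := by
        rw [hEv, show (4:ℝ) * Real.exp (b/(n:ℝ)^α) - 4 = 4*(Real.exp (b/(n:ℝ)^α) - 1) from by ring,
          abs_mul, abs_of_nonneg (by norm_num : (0:ℝ) ≤ 4)]
        have h8 : |b/(n:ℝ)^α| * 4 ≤ (1/(n:ℝ)^α) * 4 := by nlinarith [abs_nonneg (b/(n:ℝ)^α)]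
        calc 4 * |Real.exp (b/(n:ℝ)^α) - 1| ≤ 4 * (2 * |b/(n:ℝ)^α|) := by linarith
          _ ≤ 8/(n:ℝ)^α := by
              have h9 : 8*(1/(n:ℝ)^α) = 8/(n:ℝ)^α := by ring
              linarith [hdle]
      have hq : 1/3 - 2/(E+2) = (E-4)/(3*(E+2)) := by
        field_simp
        ring
      have h6 : (0:ℝ) < 3*(E+2) := by linarith
      rw [Real.norm_eq_abs, abs_mul, abs_of_pos ht2pos, hq, abs_div, abs_of_pos h6]
      calc T * (|E - 4|/(3*(E+2)))
          ≤ T * ((8/(n:ℝ)^α)/6) := by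
            apply mul_le_mul_of_nonneg_left _ ht2pos.le
            exact div_le_div₀ (by positivity) hE4 (by norm_num) (by linarith)
        _ ≤ 2 * T⁻¹ := by
            rw [hT4]
            have hTpos : (0:ℝ) < T := ht2pos
            have heq : T * ((8/T^2)/6) = (4/3)*T⁻¹ := by
              field_simp
              ring
            rw [heq]
            nlinarith [inv_nonneg.mpr hTpos.le]
    · have h := ht2.inv_tendsto_atTop.const_mul 2
      rwa [mul_zero] at h
  have hBt : Tendsto (fun n : ℕ =>
      -(2*(2/(Real.exp (Real.log 4 + b/(n:ℝ)^α) + 2))/3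
          - 2*(2/(Real.exp (Real.log 4 + b/(n:ℝ)^α) + 2))^2)
        * ((Real.log 4 + b/(n:ℝ)^α) * (Kcurve (Real.log 4) + k/(n:ℝ)^α))^4
        * ((n:ℝ)^(α/4))^(2:ℕ)) atTop (𝓝 0) := by
    have hfac : Tendsto (fun n : ℕ => -2 * (2/(Real.exp (Real.log 4 + b/(n:ℝ)^α) + 2))
        * ((Real.log 4 + b/(n:ℝ)^α) * (Kcurve (Real.log 4) + k/(n:ℝ)^α))^4) atTop
        (𝓝 (-2 * (1/3) * (3/2)^4)) := (hpt.const_mul (-2)).mul (hut.pow 4)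
    have h := hfac.mul hz
    rw [mul_zero] at h
    exact h.congr (fun n => by ring)
  -- C limit
  have hCt : Tendsto (fun n : ℕ =>
      -(4*(2/(Real.exp (Real.log 4 + b/(n:ℝ)^α) + 2))/45
          - 4*(2/(Real.exp (Real.log 4 + b/(n:ℝ)^α) + 2))^2/3
          + 8*(2/(Real.exp (Real.log 4 + b/(n:ℝ)^α) + 2))^3/3)
        * ((Real.log 4 + b/(n:ℝ)^α) * (Kcurve (Real.log 4) + k/(n:ℝ)^α))^6
        - 9/40) atTop (𝓝 0) := by
    have hinner : Tendsto (fun n : ℕ =>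
        4*(2/(Real.exp (Real.log 4 + b/(n:ℝ)^α) + 2))/45
          - 4*(2/(Real.exp (Real.log 4 + b/(n:ℝ)^α) + 2))^2/3
          + 8*(2/(Real.exp (Real.log 4 + b/(n:ℝ)^α) + 2))^3/3) atTop
        (𝓝 (4*(1/3)/45 - 4*(1/3:ℝ)^2/3 + 8*(1/3:ℝ)^3/3)) :=
      (((hpt.const_mul 4).div_const 45).sub (((hpt.pow 2).const_mul 4).div_const 3)).add
        (((hpt.pow 3).const_mul 8).div_const 3)
    have h := (hinner.neg.mul (hut.pow 6)).sub_const (9/40)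
    have hval : -(4*(1/3)/45 - 4*(1/3:ℝ)^2/3 + 8*(1/3:ℝ)^3/3) * (3/2:ℝ)^6 - 9/40 = 0 := by
      norm_num
    rwa [hval] at h
  -- D limit
  have hDt : Tendsto (fun n : ℕ =>
      1000*((Real.log 4 + b/(n:ℝ)^α) * (Kcurve (Real.log 4) + k/(n:ℝ)^α))^8*R^8
        / ((n:ℝ)^(α/4))^(2:ℕ)) atTop (𝓝 0) := by
    have hnum : Tendsto (fun n : ℕ =>
        1000*((Real.log 4 + b/(n:ℝ)^α) * (Kcurve (Real.log 4) + k/(n:ℝ)^α))^8*R^8) atTop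
        (𝓝 (1000*(3/2:ℝ)^8*R^8)) := ((hut.pow 8).const_mul 1000).mul_const (R^8)
    have h := hnum.mul ht2.inv_tendsto_atTop
    rw [mul_zero] at h
    exact h.congr (fun n => by simp [div_eq_mul_inv])
  -- total bound tends to 0
  have hM := (((hAt.abs.mul_const (R^2)).add (hBt.abs.mul_const (R^4))).add
      (hCt.abs.mul_const (R^6))).add hDt
  rw [show |(0:ℝ)| *R^2 + |(0:ℝ)| *R^4 + |(0:ℝ)| *R^6 + 0 = 0 by simp] at hM
  rw [Metric.tendstoUniformlyOn_iff]
  intro ε hε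
  have hMε : ∀ᶠ n : ℕ in atTop, _ < ε := hM.eventually_lt_const hε
  have evt1 : ∀ᶠ n : ℕ in atTop, 1 ≤ (n:ℝ)^(α/4) := ht.eventually_ge_atTop 1
  have evtR : ∀ᶠ n : ℕ in atTop, 8*R ≤ (n:ℝ)^(α/4) := ht.eventually_ge_atTop (8*R)
  have evul : ∀ᶠ n : ℕ in atTop, 1 < (Real.log 4 + b/(n:ℝ)^α) * (Kcurve (Real.log 4) + k/(n:ℝ)^α) :=
    hut.eventually_const_lt (by norm_num)
  have evur : ∀ᶠ n : ℕ in atTop, (Real.log 4 + b/(n:ℝ)^α) * (Kcurve (Real.log 4) + k/(n:ℝ)^α) < 2 :=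
    hut.eventually_lt_const (by norm_num)
  filter_upwards [evt1, evtR, evul, evur, hMε] with n ht1 htR hu1 hu2 hMn
  intro x hx
  have hxR := hCR x hx
  have htpos : (0:ℝ) < (n:ℝ)^(α/4) := lt_of_lt_of_le one_pos ht1
  rw [Real.dist_eq, ← r6 n]
  set t' := (n:ℝ)^(α/4) with ht'd
  set B' := Real.log 4 + b/(n:ℝ)^α with hB'd
  set K' := Kcurve (Real.log 4) + k/(n:ℝ)^α with hK'd
  clear_value t' B' K'
  have hupos : (0:ℝ) < B' * K' := lt_trans one_pos hu1
  have hym : |B' * K' * x / t'| ≤ 1/4 := by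
    rw [abs_div, abs_of_pos htpos, abs_mul, abs_of_pos hupos, div_le_iff₀ htpos]
    have hu3 : B' * K' * |x| ≤ 2 * R :=
      mul_le_mul hu2.le hxR (abs_nonneg x) (by norm_num)
    linarith
  have hmaster := master B' K' t' x htpos hym
  set G' := freeEnergyG B' K' (x/t') with hG'd
  set E2 := Real.exp B' + 2 with hE2d
  set U := B' * K' with hUd
  set DK := Real.log 4 * (deriv Kcurve (Real.log 4) * b - k) with hDKd
  clear_value G' E2 U DK
  have key : DK * x^2 + 9/40*x^6 - t'^6 * G'
      = (-(U*(1 - 2*(2/E2)*U)*t'^4 - DK))*x^2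
        + (-(-(2*(2/E2)/3 - 2*(2/E2)^2)*U^4*t'^2))*x^4
        + (-(-(4*(2/E2)/45 - 4*(2/E2)^2/3 + 8*(2/E2)^3/3)*U^6 - 9/40))*x^6
        + ((U*(1 - 2*(2/E2)*U)*t'^4)*x^2 + (-(2*(2/E2)/3 - 2*(2/E2)^2)*U^4*t'^2)*x^4
            + (-(4*(2/E2)/45 - 4*(2/E2)^2/3 + 8*(2/E2)^3/3)*U^6)*x^6 - t'^6*G') := by
    ring
  rw [key]
  refine lt_of_le_of_lt ?_ hMn
  have hx2 : x^2 ≤ R^2 :=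
    le_trans (le_trans (le_abs_self _) (le_of_eq (pow_abs x 2).symm))
      (pow_le_pow_left₀ (abs_nonneg x) hxR 2)
  have hx4 : x^4 ≤ R^4 :=
    le_trans (le_trans (le_abs_self _) (le_of_eq (pow_abs x 4).symm))
      (pow_le_pow_left₀ (abs_nonneg x) hxR 4)
  have hx6 : x^6 ≤ R^6 :=
    le_trans (le_trans (le_abs_self _) (le_of_eq (pow_abs x 6).symm))
      (pow_le_pow_left₀ (abs_nonneg x) hxR 6)
  have hx8 : x^8 ≤ R^8 :=
    le_trans (le_trans (le_abs_self _) (le_of_eq (pow_abs x 8).symm))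
      (pow_le_pow_left₀ (abs_nonneg x) hxR 8)
  have hD : |(U*(1 - 2*(2/E2)*U)*t'^4)*x^2 + (-(2*(2/E2)/3 - 2*(2/E2)^2)*U^4*t'^2)*x^4
      + (-(4*(2/E2)/45 - 4*(2/E2)^2/3 + 8*(2/E2)^3/3)*U^6)*x^6 - t'^6*G'|
      ≤ 1000*U^8*R^8/t'^2 := by
    rw [abs_sub_comm]
    refine hmaster.trans ?_
    gcongr
  refine le_trans (abs4 _ _ _ _ x) ?_
  have b1 : |U*(1 - 2*(2/E2)*U)*t'^4 - DK| * x^2 ≤ |U*(1 - 2*(2/E2)*U)*t'^4 - DK| * R^2 :=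
    mul_le_mul_of_nonneg_left hx2 (abs_nonneg _)
  have b2 : |(-(2*(2/E2)/3 - 2*(2/E2)^2)*U^4*t'^2)| * x^4
      ≤ |(-(2*(2/E2)/3 - 2*(2/E2)^2)*U^4*t'^2)| * R^4 :=
    mul_le_mul_of_nonneg_left hx4 (abs_nonneg _)
  have b3 : |(-(4*(2/E2)/45 - 4*(2/E2)^2/3 + 8*(2/E2)^3/3)*U^6 - 9/40)| * x^6
      ≤ |(-(4*(2/E2)/45 - 4*(2/E2)^2/3 + 8*(2/E2)^3/3)*U^6 - 9/40)| * R^6 :=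
    mul_le_mul_of_nonneg_left hx6 (abs_nonneg _)
  linarith
end

section
/- Let β_c = log 4, c₄ = 3/16, c₆ = 9/40, and for ℓ ∈ ℝ let g_ℓ(x) = (1/2)·β_c(K''(β_c) − ℓ)·x² − 4c₄·x⁴ + c₆·x⁶. Define ℓ_c = (−β_c² − 8β_c + 12)/(4β_c³), which equals K''(β_c) − 5/(4β_c). Then: (i) g_ℓ has a nonzero global minimum point if and only if ℓ ≥ ℓ_c; (ii) if ℓ > ℓ_c, then the set of global minimum points of g_ℓ over ℝ is exactly {x̄(ℓ), −x̄(ℓ)}, where x̄(ℓ) = (√10/3)·(1 + (1 − (3β_c/5)(K''(β_c) − ℓ))^{1/2})^{1/2}; (iii) if ℓ = ℓ_c, then the set of global minimum points of g_ℓ over ℝ is exactly {0, (5/3)^{1/2}, −(5/3)^{1/2}}. -/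
open Real Filter

lemma hK1aux {x : ℝ} (hx : x ≠ 0) :
    HasDerivAt Kcurve ((x * Real.exp x - Real.exp x - 2) / (4 * x ^ 2)) x := by
  have h1 : HasDerivAt (fun x : ℝ => Real.exp x + 2) (Real.exp x) x :=
    (Real.hasDerivAt_exp x).add_const 2
  have h2 : HasDerivAt (fun x : ℝ => 4 * x) 4 x := by
    simpa using (hasDerivAt_id x).const_mul 4
  have := h1.div h2 (by simpa using hx)
  refine this.congr_deriv ?_
  field_simp
  ring

lemma hK2aux {x : ℝ} (hx : x ≠ 0) :
    HasDerivAt (deriv Kcurve)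
      ((x * Real.exp x * (4 * x ^ 2) - (x * Real.exp x - Real.exp x - 2) * (8 * x)) /
        (4 * x ^ 2) ^ 2) x := by
  have hN : HasDerivAt (fun x : ℝ => x * Real.exp x - Real.exp x - 2) (x * Real.exp x) x := by
    have := (((hasDerivAt_id x).mul (Real.hasDerivAt_exp x)).sub (Real.hasDerivAt_exp x)).sub_const 2
    refine this.congr_deriv ?_
    simp
  have hD : HasDerivAt (fun x : ℝ => 4 * x ^ 2) (8 * x) x := by
    have := (hasDerivAt_pow 2 x).const_mul 4
    refine this.congr_deriv ?_
    norm_num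
    ring
  have hdiv := hN.div hD (by positivity)
  have heq : deriv Kcurve =ᶠ[nhds x]
      (fun x => (x * Real.exp x - Real.exp x - 2) / (4 * x ^ 2)) := by
    filter_upwards [eventually_ne_nhds hx] with y hy
    exact (hK1aux hy).deriv
  exact (hdiv.congr_of_eventuallyEq heq)

lemma K2val : iteratedDeriv 2 Kcurve (Real.log 4) =
    ((Real.log 4) ^ 2 - 2 * Real.log 4 + 3) / (Real.log 4) ^ 3 := by
  have hβ : (0:ℝ) < Real.log 4 := Real.log_pos (by norm_num)
  have hβ' : Real.log 4 ≠ 0 := ne_of_gt hβ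
  have he : Real.exp (Real.log 4) = 4 := Real.exp_log (by norm_num)
  have h2 : iteratedDeriv 2 Kcurve = deriv (deriv Kcurve) := by
    show iteratedDeriv (1+1) Kcurve = _
    rw [iteratedDeriv_succ, iteratedDeriv_one]
  rw [h2, (hK2aux hβ').deriv, he]
  field_simp
  ring

noncomputable def Pp (a x : ℝ) : ℝ := a*x^2 - 3/4*x^4 + 9/40*x^6

noncomputable def xbar (a : ℝ) : ℝ := Real.sqrt (10/9*(1+Real.sqrt (1-6*a/5)))

lemma Pp_neg (a x : ℝ) : Pp a (-x) = Pp a x := by simp only [Pp]; ring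

lemma setup (a : ℝ) (ha : a ≤ 5/8) :
    ∃ s t : ℝ, s = Real.sqrt (1-6*a/5) ∧ t = 10/9*(1+s) ∧ s^2 = 1-6*a/5 ∧
      1/2 ≤ s ∧ 5/3 ≤ t ∧ (Real.sqrt t)^2 = t ∧ xbar a = Real.sqrt t ∧
      27/40*t^2 - 3/2*t + a = 0 := by
  set s := Real.sqrt (1-6*a/5) with hs
  have hs0 : (0:ℝ) ≤ 1 - 6*a/5 := by linarith
  have hs2 : s^2 = 1-6*a/5 := Real.sq_sqrt hs0
  have hshalf : 1/2 ≤ s := by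
    have h := Real.sqrt_le_sqrt (show (1/4:ℝ) ≤ 1 - 6*a/5 by linarith)
    rwa [show (1/4:ℝ) = (1/2)^2 by norm_num, Real.sqrt_sq (by norm_num)] at h
  refine ⟨s, 10/9*(1+s), rfl, rfl, hs2, hshalf, by linarith, Real.sq_sqrt (by linarith), rfl,
    by linear_combination (5/6)*hs2⟩

lemma lemA (a : ℝ) (ha : a ≤ 5/8) (y : ℝ) : Pp a (xbar a) ≤ Pp a y := by
  obtain ⟨s, t, hs, ht, hs2, hshalf, ht53, hsq, hxb, hcrit⟩ := setup a ha
  rw [hxb]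
  have hv : Pp a (Real.sqrt t) = a*t - 3/4*t^2 + 9/40*t^3 := by
    simp only [Pp]
    rw [show (Real.sqrt t)^4 = ((Real.sqrt t)^2)^2 by ring,
        show (Real.sqrt t)^6 = ((Real.sqrt t)^2)^3 by ring, hsq]
  have key : Pp a y - (a*t - 3/4*t^2 + 9/40*t^3) = 9/40*(y^2-t)^2*(y^2+2*t-10/3) := by
    simp only [Pp]; linear_combination (y^2 - t) * hcrit
  have h1 : 0 ≤ 9/40*(y^2-t)^2*(y^2+2*t-10/3) := by
    nlinarith [sq_nonneg y, sq_nonneg (y^2-t)]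
  linarith [key, hv]

lemma lemB (a : ℝ) (ha : a < 5/8) (x : ℝ) (hx : Pp a x ≤ Pp a (xbar a)) :
    x = xbar a ∨ x = -xbar a := by
  obtain ⟨s, t, hs, ht, hs2, hshalf, ht53, hsq, hxb, hcrit⟩ := setup a ha.le
  have hshalf' : 1/2 < s := by
    have h := Real.sqrt_lt_sqrt (by norm_num : (0:ℝ) ≤ 1/4)
      (show (1/4:ℝ) < 1 - 6*a/5 by linarith)
    rwa [show (1/4:ℝ) = (1/2)^2 by norm_num, Real.sqrt_sq (by norm_num), ← hs] at h
  have ht53' : 5/3 < t := by rw [ht]; linarith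
  have hv : Pp a (Real.sqrt t) = a*t - 3/4*t^2 + 9/40*t^3 := by
    simp only [Pp]
    rw [show (Real.sqrt t)^4 = ((Real.sqrt t)^2)^2 by ring,
        show (Real.sqrt t)^6 = ((Real.sqrt t)^2)^3 by ring, hsq]
  have key : Pp a x - (a*t - 3/4*t^2 + 9/40*t^3) = 9/40*(x^2-t)^2*(x^2+2*t-10/3) := by
    simp only [Pp]; linear_combination (x^2 - t) * hcrit
  rw [hxb] at hx ⊢
  have hle : 9/40*(x^2-t)^2*(x^2+2*t-10/3) ≤ 0 := by linarith [key, hv]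
  have hpos : 0 < x^2+2*t-10/3 := by nlinarith [sq_nonneg x]
  have h00 : 9/40*(x^2-t)^2*(x^2+2*t-10/3) = 0 :=
    le_antisymm hle (mul_nonneg (mul_nonneg (by norm_num) (sq_nonneg _)) hpos.le)
  have hzero : (x^2-t)^2 = 0 := by
    rcases mul_eq_zero.1 h00 with h | h
    · rcases mul_eq_zero.1 h with h | h
      · norm_num at h
      · exact h
    · exact absurd h (ne_of_gt hpos)
  have hx2 : x^2 = t := by
    have h2 : x^2 - t = 0 := sq_eq_zero_iff.1 hzero
    linarith
  have : (x - Real.sqrt t) * (x + Real.sqrt t) = 0 := by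
    have : x^2 - (Real.sqrt t)^2 = 0 := by rw [hsq, hx2]; ring
    linear_combination this
  rcases mul_eq_zero.1 this with h | h
  · left; linarith
  · right; linarith

lemma Pp_fac (x : ℝ) : Pp (5/8) x = x^2*(3*x^2-5)^2/40 := by simp only [Pp]; ring

lemma lemC (y : ℝ) : 0 ≤ Pp (5/8) y := by rw [Pp_fac]; positivity

lemma lemC0 : Pp (5/8) 0 = 0 := by simp [Pp]

lemma lemC1 : Pp (5/8) (Real.sqrt (5/3)) = 0 := by
  have h : (Real.sqrt (5/3))^2 = 5/3 := Real.sq_sqrt (by norm_num)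
  simp only [Pp]
  rw [show (Real.sqrt (5/3))^4 = ((Real.sqrt (5/3))^2)^2 by ring,
      show (Real.sqrt (5/3))^6 = ((Real.sqrt (5/3))^2)^3 by ring, h]
  norm_num

lemma lemC2 (x : ℝ) (hx : Pp (5/8) x ≤ 0) :
    x = 0 ∨ x = Real.sqrt (5/3) ∨ x = -Real.sqrt (5/3) := by
  have heq : Pp (5/8) x = 0 := le_antisymm hx (lemC x)
  rw [Pp_fac] at heq
  have h0 : x^2*(3*x^2-5)^2 = 0 := by linarith
  rcases mul_eq_zero.1 h0 with h | h
  · left; exact pow_eq_zero_iff (by norm_num) |>.1 h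
  · have hx2 : x^2 = 5/3 := by nlinarith
    have hsq : (Real.sqrt (5/3))^2 = 5/3 := Real.sq_sqrt (by norm_num)
    have : (x - Real.sqrt (5/3)) * (x + Real.sqrt (5/3)) = 0 := by
      linear_combination hx2 - hsq
    rcases mul_eq_zero.1 this with h | h
    · right; left; linarith
    · right; right; linarith

lemma lemD (a : ℝ) (ha : 5/8 < a) (x : ℝ) (hx : x ≠ 0) : 0 < Pp a x := by
  have h2 : 0 < x^2 := by positivity
  simp only [Pp]
  nlinarith [mul_pos h2 (mul_pos h2 h2), sq_nonneg (x^2 - 5/3),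
    mul_nonneg (sq_nonneg x) (sq_nonneg (x^2-5/3))]

lemma xbar_eq (a : ℝ) :
    xbar a = Real.sqrt 10 / 3 * Real.sqrt (1 + Real.sqrt (1 - 6*a/5)) := by
  have h10 : (Real.sqrt 10)^2 = 10 := Real.sq_sqrt (by norm_num)
  have h1s : (Real.sqrt (1 + Real.sqrt (1-6*a/5)))^2 = 1 + Real.sqrt (1-6*a/5) :=
    Real.sq_sqrt (by positivity)
  unfold xbar
  rw [show (10:ℝ)/9*(1+Real.sqrt (1-6*a/5))
      = (Real.sqrt 10 / 3 * Real.sqrt (1 + Real.sqrt (1-6*a/5)))^2 from by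
    rw [mul_pow, div_pow, h10, h1s]; ring]
  exact Real.sqrt_sq (by positivity)

lemma xbar_pos (a : ℝ) : 0 < xbar a := by
  unfold xbar
  have := Real.sqrt_nonneg (1-6*a/5)
  exact Real.sqrt_pos.2 (by linarith)

/-- global minimum points of `g_ℓ(x) = (1/2)β_c(K''(β_c) − ℓ)x² − 4c₄x⁴ + c₆x⁶`
with the discontinuous bifurcation at `ℓ_c`. -/
theorem stmt7 (g : ℝ → ℝ → ℝ)
    (hg : ∀ ℓ x : ℝ, g ℓ x =
      (1 / 2) * Real.log 4 * (iteratedDeriv 2 Kcurve (Real.log 4) - ℓ) * x ^ 2 -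
        4 * (3 / 16) * x ^ 4 + (9 / 40) * x ^ 6)
    (ℓc : ℝ)
    (hℓc : ℓc = (-(Real.log 4) ^ 2 - 8 * Real.log 4 + 12) / (4 * (Real.log 4) ^ 3)) :
    (ℓc = iteratedDeriv 2 Kcurve (Real.log 4) - 5 / (4 * Real.log 4)) ∧
    (∀ ℓ : ℝ, (∃ x : ℝ, x ≠ 0 ∧ ∀ y : ℝ, g ℓ x ≤ g ℓ y) ↔ ℓc ≤ ℓ) ∧
    (∀ ℓ : ℝ, ℓc < ℓ →
      {x : ℝ | ∀ y : ℝ, g ℓ x ≤ g ℓ y} =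
        {Real.sqrt 10 / 3 *
            Real.sqrt (1 + Real.sqrt (1 -
              3 * Real.log 4 / 5 * (iteratedDeriv 2 Kcurve (Real.log 4) - ℓ))),
         -(Real.sqrt 10 / 3 *
            Real.sqrt (1 + Real.sqrt (1 -
              3 * Real.log 4 / 5 * (iteratedDeriv 2 Kcurve (Real.log 4) - ℓ))))}) ∧
    ({x : ℝ | ∀ y : ℝ, g ℓc x ≤ g ℓc y} =
      {0, Real.sqrt (5 / 3), -Real.sqrt (5 / 3)}) := by
  have hβ : (0:ℝ) < Real.log 4 := Real.log_pos (by norm_num)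
  have hβ' : Real.log 4 ≠ 0 := ne_of_gt hβ
  have h1 : ℓc = iteratedDeriv 2 Kcurve (Real.log 4) - 5 / (4 * Real.log 4) := by
    rw [hℓc, K2val]; field_simp; ring
  set K2 := iteratedDeriv 2 Kcurve (Real.log 4) with hK2def
  have hgP : ∀ ℓ x, g ℓ x = Pp (1/2*Real.log 4*(K2 - ℓ)) x := by
    intro ℓ x; rw [hg]; simp only [Pp]; ring
  have hkey : ∀ ℓ, 1/2*Real.log 4*(K2 - ℓ) = 5/8 - Real.log 4/2*(ℓ - ℓc) := by
    intro ℓ; rw [h1]; field_simp; ring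
  refine ⟨h1, ?_, ?_, ?_⟩
  · -- part (ii)
    intro ℓ
    set a := 1/2*Real.log 4*(K2 - ℓ) with hadef
    constructor
    · rintro ⟨x, hx0, hmin⟩
      by_contra hlt
      push_neg at hlt
      have ha : 5/8 < a := by
        rw [hadef, hkey ℓ]
        nlinarith
      have h0 := hmin 0
      rw [hgP, hgP] at h0
      have hP0 : Pp a 0 = 0 := by simp [Pp]
      have := lemD a ha x hx0
      rw [← hadef] at h0
      rw [hP0] at h0
      linarith
    · intro h
      have ha : a ≤ 5/8 := by
        rw [hadef, hkey ℓ]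
        nlinarith
      exact ⟨xbar a, ne_of_gt (xbar_pos a), fun y => by
        rw [hgP, hgP, ← hadef]; exact lemA a ha y⟩
  · -- part (iii)
    intro ℓ hℓ
    set a := 1/2*Real.log 4*(K2 - ℓ) with hadef
    have ha : a < 5/8 := by
      rw [hadef, hkey ℓ]
      nlinarith
    have hinner : 1 - 3 * Real.log 4 / 5 * (K2 - ℓ) = 1 - 6*a/5 := by
      rw [hadef]; ring
    have hexpr : Real.sqrt 10 / 3 * Real.sqrt (1 + Real.sqrt (1 -
        3 * Real.log 4 / 5 * (K2 - ℓ))) = xbar a := by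
      rw [hinner, xbar_eq]
    ext x
    simp only [Set.mem_setOf_eq, Set.mem_insert_iff, Set.mem_singleton_iff, hexpr]
    constructor
    · intro hmin
      have hx := hmin (xbar a)
      rw [hgP, hgP, ← hadef] at hx
      exact lemB a ha x hx
    · rintro (h | h) <;> intro y <;> rw [hgP, hgP, ← hadef, h]
      · exact lemA a ha.le y
      · rw [Pp_neg]; exact lemA a ha.le y
  · -- part (iv)
    have hac : 1/2*Real.log 4*(K2 - ℓc) = 5/8 := by
      rw [hkey ℓc]; ring
    have hgc : ∀ x, g ℓc x = Pp (5/8) x := by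
      intro x; rw [hgP, hac]
    ext x
    simp only [Set.mem_setOf_eq, Set.mem_insert_iff, Set.mem_singleton_iff]
    constructor
    · intro hmin
      have hx := hmin 0
      rw [hgc, hgc, lemC0] at hx
      exact lemC2 x hx
    · rintro (h | h | h) <;> intro y <;> rw [hgc, hgc, h]
      · rw [lemC0]; exact lemC y
      · rw [lemC1]; exact lemC y
      · rw [Pp_neg, lemC1]; exact lemC y
end

section
/- Let β_c = log 4, c₄ = 3/16, c₆ = 9/40, and for ℓ ∈ ℝ let g(x) = (1/2)·β_c(K''(β_c) − ℓ)·x² + 4c₄·x⁴ + c₆·x⁶. Then g has a nonzero global minimum point if and only if ℓ > K''(β_c); and if ℓ > K''(β_c), then the set of global minimum points of g over ℝ is exactly {x̄, −x̄}, where x̄ = (√10/3)·(−1 + (1 + (3β_c/5)(ℓ − K''(β_c)))^{1/2})^{1/2}. -/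
open Real Filter

set_option maxHeartbeats 2000000 in
/-- global minimum points of
`g(x) = (1/2)β_c(K''(β_c) − ℓ)x² + 4c₄x⁴ + c₆x⁶`. -/
theorem stmt9 (ℓ : ℝ) (g : ℝ → ℝ)
    (hg : ∀ x : ℝ, g x =
      (1 / 2) * Real.log 4 * (iteratedDeriv 2 Kcurve (Real.log 4) - ℓ) * x ^ 2 +
        4 * (3 / 16) * x ^ 4 + (9 / 40) * x ^ 6) :
    ((∃ x : ℝ, x ≠ 0 ∧ ∀ y : ℝ, g x ≤ g y) ↔ iteratedDeriv 2 Kcurve (Real.log 4) < ℓ) ∧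
    (iteratedDeriv 2 Kcurve (Real.log 4) < ℓ →
      {x : ℝ | ∀ y : ℝ, g x ≤ g y} =
        {Real.sqrt 10 / 3 *
            Real.sqrt (-1 + Real.sqrt (1 +
              3 * Real.log 4 / 5 * (ℓ - iteratedDeriv 2 Kcurve (Real.log 4)))),
         -(Real.sqrt 10 / 3 *
            Real.sqrt (-1 + Real.sqrt (1 +
              3 * Real.log 4 / 5 * (ℓ - iteratedDeriv 2 Kcurve (Real.log 4)))))}) := by
  set K2 := iteratedDeriv 2 Kcurve (Real.log 4) with hK2def
  clear_value K2
  set L := Real.log 4 with hLdef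
  have hLpos : 0 < L := Real.log_pos (by norm_num)
  clear_value L
  set S := Real.sqrt (1 + 3 * L / 5 * (ℓ - K2)) with hSdef
  set xb := Real.sqrt 10 / 3 * Real.sqrt (-1 + S) with hxbdef
  have main : K2 < ℓ → (xb ≠ 0 ∧ {x : ℝ | ∀ y : ℝ, g x ≤ g y} = {xb, -xb}) := by
    intro hℓ
    have harg : (1:ℝ) < 1 + 3 * L / 5 * (ℓ - K2) := by nlinarith
    have hSsq : S ^ 2 = 1 + 3 * L / 5 * (ℓ - K2) := Real.sq_sqrt (by linarith)
    have hS0 : 0 ≤ S := Real.sqrt_nonneg _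
    have hS1 : 1 < S := by nlinarith
    have hxbpos : 0 < xb := by
      apply mul_pos
      · have : 0 < Real.sqrt 10 := Real.sqrt_pos.mpr (by norm_num)
        positivity
      · exact Real.sqrt_pos.mpr (by linarith)
    have hxbsq : xb ^ 2 = 10 / 9 * (-1 + S) := by
      rw [hxbdef, mul_pow, div_pow, Real.sq_sqrt (by norm_num : (0:ℝ) ≤ 10),
        Real.sq_sqrt (by linarith : (0:ℝ) ≤ -1 + S)]
      ring
    have hstar : 27 / 40 * (xb ^ 2) ^ 2 + 3 / 2 * xb ^ 2 + 1 / 2 * L * (K2 - ℓ) = 0 := by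
      rw [hxbsq]; linear_combination (5 / 6) * hSsq
    have hid : ∀ x : ℝ, g x - g xb =
        (x ^ 2 - xb ^ 2) ^ 2 * (9 / 40 * x ^ 2 + 9 / 20 * xb ^ 2 + 3 / 4) := by
      intro x
      rw [hg x, hg xb]
      linear_combination (x ^ 2 - xb ^ 2) * hstar
    have hmin : ∀ y : ℝ, g xb ≤ g y := by
      intro y
      have h := hid y
      have h2 : 0 ≤ (y ^ 2 - xb ^ 2) ^ 2 * (9 / 40 * y ^ 2 + 9 / 20 * xb ^ 2 + 3 / 4) :=
        mul_nonneg (sq_nonneg _) (by positivity)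
      linarith
    refine ⟨ne_of_gt hxbpos, ?_⟩
    ext x
    simp only [Set.mem_setOf_eq, Set.mem_insert_iff, Set.mem_singleton_iff]
    constructor
    · intro hx
      have h1 : g x = g xb := le_antisymm (hx xb) (hmin x)
      have h2 := hid x
      have hf : 0 < 9 / 40 * x ^ 2 + 9 / 20 * xb ^ 2 + 3 / 4 := by positivity
      have hsq0 : (x ^ 2 - xb ^ 2) ^ 2 = 0 := by nlinarith [sq_nonneg (x ^ 2 - xb ^ 2)]
      have hx2 : x ^ 2 = xb ^ 2 := by nlinarith [sq_nonneg (x ^ 2 - xb ^ 2)]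
      have habs : |x| = |xb| := by
        rw [← Real.sqrt_sq_eq_abs, ← Real.sqrt_sq_eq_abs, hx2]
      exact abs_eq_abs.mp habs
    · have hsym : g (-xb) = g xb := by rw [hg, hg]; ring
      rintro (rfl | rfl)
      · exact hmin
      · intro y; rw [hsym]; exact hmin y
  refine ⟨⟨?_, ?_⟩, fun hℓ => (main hℓ).2⟩
  · rintro ⟨x, hx0, hxmin⟩
    by_contra hc
    push_neg at hc
    have ha : 0 ≤ 1 / 2 * L * (K2 - ℓ) := by
      apply mul_nonneg (by positivity) (by linarith)
    have h0 := hxmin 0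
    rw [hg x, hg 0] at h0
    norm_num at h0
    have t1 : 0 ≤ 1 / 2 * L * (K2 - ℓ) * x ^ 2 := mul_nonneg ha (sq_nonneg x)
    have t2 : 0 < x ^ 4 := by positivity
    have t3 : 0 ≤ x ^ 6 := by positivity
    linarith
  · intro hℓ
    obtain ⟨hne, hset⟩ := main hℓ
    refine ⟨xb, hne, ?_⟩
    have : xb ∈ {x : ℝ | ∀ y : ℝ, g x ≤ g y} := by
      rw [hset]; exact Set.mem_insert _ _
    exact this
end

section
/- Fix β with 0 < β ≤ β_c = log 4, and for K > 0 let M_{β,K} denote the set of global minimum points of G_{β,K} over ℝ, i.e., M_{β,K} = {x ∈ ℝ : G_{β,K}(x) ≤ G_{β,K}(y) for all y ∈ ℝ}. Then: (a) for every K with 0 < K ≤ K(β), M_{β,K} = {0}; (b) for every K > K(β) there exists m(β,K) > 0 such that M_{β,K} = {m(β,K), −m(β,K)}; (c) the function K ↦ m(β,K) is positive, increasing, and continuous on (K(β), ∞), and m(β,K) → 0 as K → K(β) from the right. In particular, M_{β,K} exhibits a continuous bifurcation at K = K(β). -/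
open Real Filter

namespace S12

open Set

/-- The derivative of `cgf β`. -/
noncomputable def fm (β t : ℝ) : ℝ := (exp t - exp (-t)) / (exp β + exp t + exp (-t))

/-- The derivative of `fm β`. -/
noncomputable def fP (β t : ℝ) : ℝ :=
  (exp β * (exp t + exp (-t)) + 4) / (exp β + exp t + exp (-t)) ^ 2

lemma den_pos (β t : ℝ) : 0 < exp β + exp t + exp (-t) := by positivity

lemma num_pos (β t : ℝ) : 0 < 1 + exp (-β) * (exp t + exp (-t)) := by positivity

lemma cgf_eq (β t : ℝ) :
    cgf β t = Real.log (1 + exp (-β) * (exp t + exp (-t))) - Real.log (1 + 2 * exp (-β)) := by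
  rw [cgf, Real.log_div (num_pos β t).ne' (by positivity)]

lemma hasDerivAt_cgf (β t : ℝ) : HasDerivAt (cgf β) (fm β t) t := by
  have hN : HasDerivAt (fun t => 1 + exp (-β) * (exp t + exp (-t)))
      (exp (-β) * (exp t - exp (-t))) t := by
    have h1 : HasDerivAt (fun t : ℝ => exp t + exp (-t)) (exp t - exp (-t)) t := by
      have := (Real.hasDerivAt_exp t).add (((Real.hasDerivAt_exp (-t)).comp t
        ((hasDerivAt_id t).neg)))
      exact this.congr_deriv (by ring)
    simpa using (h1.const_mul (exp (-β))).const_add 1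
  have hlog := (Real.hasDerivAt_log (num_pos β t).ne').comp t hN
  have hlog' : HasDerivAt (fun t => Real.log (1 + exp (-β) * (exp t + exp (-t))))
      ((1 + exp (-β) * (exp t + exp (-t)))⁻¹ * (exp (-β) * (exp t - exp (-t)))) t := hlog
  have heq : (fun t => Real.log (1 + exp (-β) * (exp t + exp (-t)))) =
      fun t => cgf β t + Real.log (1 + 2 * exp (-β)) := by
    funext s; rw [cgf_eq]; ring
  rw [heq] at hlog'
  have h2 : HasDerivAt (cgf β)
      (exp (-β) * (exp t - exp (-t)) * (1 + exp (-β) * (exp t + exp (-t)))⁻¹) t := by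
    have := hlog'.sub_const (Real.log (1 + 2 * exp (-β)))
    simpa [mul_comm] using this
  convert h2 using 1
  rw [fm]
  have he : exp (-β) * exp β = 1 := by rw [← Real.exp_add]; simp
  field_simp
  linear_combination (-(exp t - exp (-t))) * he

lemma hasDerivAt_fm (β t : ℝ) : HasDerivAt (fm β) (fP β t) t := by
  have hs : HasDerivAt (fun t : ℝ => exp t - exp (-t)) (exp t + exp (-t)) t := by
    have := (Real.hasDerivAt_exp t).sub (((Real.hasDerivAt_exp (-t)).comp t
      ((hasDerivAt_id t).neg)))
    exact this.congr_deriv (by ring)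
  have hc : HasDerivAt (fun t : ℝ => exp β + exp t + exp (-t)) (exp t - exp (-t)) t := by
    have h1 : HasDerivAt (fun t : ℝ => exp t + exp (-t)) (exp t - exp (-t)) t := by
      have := (Real.hasDerivAt_exp t).add (((Real.hasDerivAt_exp (-t)).comp t
        ((hasDerivAt_id t).neg)))
      exact this.congr_deriv (by ring)
    have := h1.const_add (exp β)
    simpa [add_assoc] using this
  have := hs.div hc (den_pos β t).ne'
  refine this.congr_deriv ?_
  rw [fP]
  have he : exp t * exp (-t) = 1 := by rw [← Real.exp_add]; simp
  have hd := (den_pos β t).ne'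
  field_simp
  ring_nf
  nlinarith [he]

lemma fm_zero (β : ℝ) : fm β 0 = 0 := by simp [fm]

lemma fm_lt_one (β t : ℝ) : fm β t < 1 := by
  rw [fm, div_lt_one (den_pos β t)]
  nlinarith [Real.exp_pos β, Real.exp_pos (-t)]

lemma fm_pos {β : ℝ} {t : ℝ} (ht : 0 < t) : 0 < fm β t := by
  apply div_pos _ (den_pos β t)
  have := Real.exp_lt_exp.2 (neg_lt_self ht)
  linarith

lemma fP_pos (β t : ℝ) : 0 < fP β t := by
  apply div_pos _ (pow_pos (den_pos β t) 2)
  nlinarith [Real.exp_pos β, Real.exp_pos t, Real.exp_pos (-t)]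

lemma fP_zero (β : ℝ) : fP β 0 = 2 / (exp β + 2) := by
  have h2 : (0:ℝ) < exp β + 2 := by positivity
  rw [fP]
  simp only [neg_zero, Real.exp_zero]
  rw [div_eq_div_iff (by positivity) (by positivity)]
  ring

lemma two_le_aux (t : ℝ) : 2 ≤ exp t + exp (-t) := by
  have h1 := Real.add_one_le_exp t
  have h2 := Real.add_one_le_exp (-t)
  linarith

lemma two_lt_aux {t : ℝ} (ht : t ≠ 0) : 2 < exp t + exp (-t) := by
  have h1 := Real.add_one_lt_exp ht
  have h2 := Real.add_one_le_exp (-t)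
  linarith

lemma aux_strictMono {t1 t2 : ℝ} (h1 : 0 ≤ t1) (h12 : t1 < t2) :
    exp t1 + exp (-t1) < exp t2 + exp (-t2) := by
  have habs : |t1| < |t2| := by
    rw [abs_of_nonneg h1, abs_of_nonneg (le_trans h1 h12.le)]; exact h12
  have := Real.cosh_lt_cosh.2 habs
  rw [Real.cosh_eq, Real.cosh_eq] at this
  linarith

lemma key_alg {b u v : ℝ} (hb0 : 0 < b) (hb : b ≤ 4) (hu : 2 ≤ u) (hv : 2 < v)
    (huv : u < v) : (b * v + 4) * (b + u) ^ 2 < (b * u + 4) * (b + v) ^ 2 := by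
  nlinarith [mul_nonneg (mul_nonneg (sub_nonneg.2 huv.le) (sub_nonneg.2 hu))
      (mul_nonneg hb0.le (by linarith : (0:ℝ) ≤ v)),
    mul_pos (sub_pos.2 huv) (mul_pos (sub_pos.2 hv) (by linarith : (0:ℝ) < 2 * b + 4)),
    mul_nonneg (sub_nonneg.2 huv.le) (mul_nonneg (sub_nonneg.2 hb) (sq_nonneg (b + 2))),
    mul_nonneg (sub_nonneg.2 huv.le) (by linarith : (0:ℝ) ≤ 4 * (u - 2))]

lemma fP_strictAntiOn {β : ℝ} (hβ4 : exp β ≤ 4) : StrictAntiOn (fP β) (Ici 0) := by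
  intro t1 h1 t2 h2 h12
  have h1 : (0:ℝ) ≤ t1 := h1
  have ht2 : 0 < t2 := lt_of_le_of_lt h1 h12
  have hu : 2 ≤ exp t1 + exp (-t1) := two_le_aux t1
  have hv : 2 < exp t2 + exp (-t2) := two_lt_aux ht2.ne'
  have huv : exp t1 + exp (-t1) < exp t2 + exp (-t2) := aux_strictMono h1 h12
  rw [fP, fP, div_lt_div_iff₀ (pow_pos (den_pos β t2) 2) (pow_pos (den_pos β t1) 2)]
  have := key_alg (Real.exp_pos β) hβ4 hu hv huv
  nlinarith [this]

lemma fm_slope {β t : ℝ} (ht : 0 < t) : ∃ ξ ∈ Ioo 0 t, fm β t = t * fP β ξ := by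
  obtain ⟨c, hc, hceq⟩ := exists_hasDerivAt_eq_slope (fm β) (fP β) ht
    (fun x _ => (hasDerivAt_fm β x).continuousAt.continuousWithinAt)
    (fun x _ => hasDerivAt_fm β x)
  refine ⟨c, hc, ?_⟩
  rw [fm_zero] at hceq
  field_simp at hceq
  rw [hceq, sub_zero, sub_zero, mul_div_assoc', mul_div_cancel_left₀ _ ht.ne']

lemma fm_lt_lin {β : ℝ} (hβ4 : exp β ≤ 4) {t : ℝ} (ht : 0 < t) :
    fm β t < 2 / (exp β + 2) * t := by
  obtain ⟨ξ, hξ, heq⟩ := fm_slope (β := β) ht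
  have hlt : fP β ξ < fP β 0 :=
    fP_strictAntiOn hβ4 (Set.mem_Ici.2 le_rfl) (Set.mem_Ici.2 hξ.1.le) hξ.1
  rw [fP_zero] at hlt
  rw [heq]
  calc t * fP β ξ < t * (2 / (exp β + 2)) := mul_lt_mul_of_pos_left hlt ht
    _ = 2 / (exp β + 2) * t := mul_comm _ _

lemma slope_anti {β : ℝ} (hβ4 : exp β ≤ 4) {t1 t2 : ℝ} (h1 : 0 < t1) (h12 : t1 < t2) :
    fm β t2 * t1 < fm β t1 * t2 := by
  obtain ⟨ξ', hξ', heq'⟩ := fm_slope (β := β) h1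
  obtain ⟨ξ, hξ, heq⟩ := exists_hasDerivAt_eq_slope (fm β) (fP β) h12
    (fun x _ => (hasDerivAt_fm β x).continuousAt.continuousWithinAt)
    (fun x _ => hasDerivAt_fm β x)
  have hlt : fP β ξ < fP β ξ' :=
    fP_strictAntiOn hβ4 (le_of_lt hξ'.1) (le_of_lt (lt_trans h1 hξ.1))
      (lt_trans hξ'.2 hξ.1)
  have h21 : (0:ℝ) < t2 - t1 := by linarith
  have heq2 : fm β t2 = fm β t1 + (t2 - t1) * fP β ξ := by
    field_simp at heq
    linarith [heq]
  have e1 : fm β t2 * t1 = fm β t1 * t1 + (t2 - t1) * (fP β ξ * t1) := by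
    rw [heq2]; ring
  have e2 : (t2 - t1) * (fP β ξ' * t1) = (t2 - t1) * fm β t1 := by rw [heq']; ring
  have e3 : fm β t1 * t1 + (t2 - t1) * fm β t1 = fm β t1 * t2 := by ring
  have hint : (t2 - t1) * (fP β ξ * t1) < (t2 - t1) * (fP β ξ' * t1) :=
    mul_lt_mul_of_pos_left (mul_lt_mul_of_pos_right hlt h1) h21
  linarith [e1, e2, e3, hint]

lemma fm_strictMono (β : ℝ) : StrictMono (fm β) :=
  strictMono_of_deriv_pos (fun x => by
    rw [(hasDerivAt_fm β x).deriv]; exact fP_pos β x)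

lemma fm_continuous (β : ℝ) : Continuous (fm β) :=
  continuous_iff_continuousAt.2 (fun x => (hasDerivAt_fm β x).continuousAt)

lemma cont_aux (β c d : ℝ) : Continuous fun K : ℝ => fm β (c * K * d) :=
  (fm_continuous β).comp ((continuous_const.mul continuous_id).mul continuous_const)

lemma fP_continuous (β : ℝ) : Continuous (fP β) := by
  apply Continuous.div
  · continuity
  · exact Continuous.pow (by continuity) 2
  · intro t; exact (pow_pos (den_pos β t) 2).ne'

lemma hasDerivAt_G (β K x : ℝ) :
    HasDerivAt (freeEnergyG β K) (2*β*K*x - 2*β*K * fm β (2*β*K*x)) x := by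
  have h1 : HasDerivAt (fun x : ℝ => β*K*x^2) (2*β*K*x) x := by
    have := (hasDerivAt_pow 2 x).const_mul (β*K)
    refine this.congr_deriv ?_
    ring
  have hl : HasDerivAt (fun x : ℝ => 2*β*K*x) (2*β*K) x := by
    simpa using (hasDerivAt_id x).const_mul (2*β*K)
  have h2 : HasDerivAt (fun x : ℝ => cgf β (2*β*K*x)) (fm β (2*β*K*x) * (2*β*K)) x :=
    (hasDerivAt_cgf β (2*β*K*x)).comp x hl
  have h3 := h1.sub h2
  have key : 2*β*K*x - 2*β*K * fm β (2*β*K*x) = 2*β*K*x - fm β (2*β*K*x) * (2*β*K) := by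
    ring
  rw [key]
  exact h3

lemma cgf_even (β t : ℝ) : cgf β (-t) = cgf β t := by
  rw [cgf, cgf, neg_neg, add_comm (Real.exp (-t))]

lemma G_even (β K x : ℝ) : freeEnergyG β K (-x) = freeEnergyG β K x := by
  rw [freeEnergyG, freeEnergyG, neg_sq, show 2*β*K*(-x) = -(2*β*K*x) by ring, cgf_even]

lemma G_abs (β K x : ℝ) : freeEnergyG β K |x| = freeEnergyG β K x := by
  rcases abs_choice x with h | h
  · rw [h]
  · rw [h, G_even]

lemma Kcurve_pos {β : ℝ} (hβ0 : 0 < β) : 0 < Kcurve β := by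
  rw [Kcurve]; positivity

lemma G_strictMonoOn_a {β K : ℝ} (hβ0 : 0 < β) (hβ4 : exp β ≤ 4) (hK0 : 0 < K)
    (hK : K ≤ Kcurve β) : StrictMonoOn (freeEnergyG β K) (Ici 0) := by
  apply strictMonoOn_of_deriv_pos (convex_Ici 0)
  · intro x _
    exact (hasDerivAt_G β K x).continuousAt.continuousWithinAt
  · intro x hx
    rw [interior_Ici] at hx
    rw [(hasDerivAt_G β K x).deriv]
    have hx0 : 0 < x := hx
    have hbk : 0 < 2*β*K := by positivity
    have harg : 0 < 2*β*K*x := by positivity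
    have hb2 : (0:ℝ) < exp β + 2 := by positivity
    have h1 : fm β (2*β*K*x) < 2/(exp β + 2) * (2*β*K*x) := fm_lt_lin hβ4 harg
    have hKc : K * (4*β) ≤ exp β + 2 := by
      rw [Kcurve] at hK
      exact (le_div_iff₀ (by positivity)).1 hK
    have h2 : 2/(exp β + 2) * (2*β*K*x) ≤ x := by
      rw [div_mul_eq_mul_div, div_le_iff₀ hb2]
      nlinarith [mul_le_mul_of_nonneg_right hKc hx0.le]
    have hfm : fm β (2*β*K*x) < x := lt_of_lt_of_le h1 h2
    nlinarith [mul_lt_mul_of_pos_left hfm hbk]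

lemma part_a {β K : ℝ} (hβ0 : 0 < β) (hβ4 : exp β ≤ 4) (hK0 : 0 < K) (hK : K ≤ Kcurve β) :
    {x : ℝ | ∀ y : ℝ, freeEnergyG β K x ≤ freeEnergyG β K y} = {0} := by
  have hmono := G_strictMonoOn_a hβ0 hβ4 hK0 hK
  ext x
  simp only [Set.mem_setOf_eq, Set.mem_singleton_iff]
  constructor
  · intro hx
    by_contra hne
    have habs : 0 < |x| := abs_pos.2 hne
    have h1 : freeEnergyG β K 0 < freeEnergyG β K |x| :=
      hmono (Set.mem_Ici.2 le_rfl) (Set.mem_Ici.2 (abs_nonneg x)) habs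
    rw [G_abs] at h1
    linarith [hx 0]
  · rintro rfl y
    rcases eq_or_ne y 0 with rfl | hy
    · exact le_rfl
    · have h1 : freeEnergyG β K 0 < freeEnergyG β K |y| :=
        hmono (Set.mem_Ici.2 le_rfl) (Set.mem_Ici.2 (abs_nonneg y)) (abs_pos.2 hy)
      rw [G_abs] at h1
      exact h1.le

/-- Sign lemma: above the fixed point, `fm β (2βKx) < x`. -/
lemma sign_above {β K mz x : ℝ} (hβ0 : 0 < β) (hβ4 : exp β ≤ 4) (hK0 : 0 < K)
    (hmz : 0 < mz) (hfix : fm β (2*β*K*mz) = mz) (hx : mz < x) :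
    fm β (2*β*K*x) < x := by
  have hbk : 0 < 2*β*K := by positivity
  have h1 : 0 < 2*β*K*mz := by positivity
  have h2 : 2*β*K*mz < 2*β*K*x := by nlinarith
  have := slope_anti hβ4 h1 h2
  rw [hfix] at this
  -- fm β (2βKx) * (2βK mz) < mz * (2βK x)
  have key : fm β (2*β*K*x) * (2*β*K*mz) < x * (2*β*K*mz) := by nlinarith
  exact lt_of_mul_lt_mul_right key h1.le

/-- Sign lemma: below the fixed point, `x < fm β (2βKx)`. -/
lemma sign_below {β K mz x : ℝ} (hβ0 : 0 < β) (hβ4 : exp β ≤ 4) (hK0 : 0 < K)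
    (hmz : 0 < mz) (hfix : fm β (2*β*K*mz) = mz) (hx0 : 0 < x) (hx : x < mz) :
    x < fm β (2*β*K*x) := by
  have hbk : 0 < 2*β*K := by positivity
  have h1 : 0 < 2*β*K*x := by positivity
  have h2 : 2*β*K*x < 2*β*K*mz := by nlinarith
  have := slope_anti hβ4 h1 h2
  rw [hfix] at this
  -- mz * (2βKx) < fm β (2βKx) * (2βK mz)
  nlinarith

lemma four_beta_K {β K : ℝ} (hβ0 : 0 < β) (hK : Kcurve β < K) : exp β + 2 < 4*β*K := by
  rw [Kcurve] at hK
  have := (div_lt_iff₀ (by positivity : (0:ℝ) < 4*β)).1 hK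
  nlinarith

lemma exists_fixed {β K : ℝ} (hβ0 : 0 < β) (hβ4 : exp β ≤ 4) (hK : Kcurve β < K) :
    ∃ x : ℝ, 0 < x ∧ fm β (2*β*K*x) = x := by
  have hK0 : 0 < K := lt_trans (Kcurve_pos hβ0) hK
  have hbk : 0 < 2*β*K := by positivity
  have hb2 : (0:ℝ) < exp β + 2 := by positivity
  have hgt : 1/(2*β*K) < fP β 0 := by
    rw [fP_zero, div_lt_div_iff₀ hbk hb2]
    linarith [four_beta_K hβ0 hK]
  -- find t0 > 0 with fP β t > 1/(2βK) on (0, t0]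
  have hopen : IsOpen {t : ℝ | 1/(2*β*K) < fP β t} :=
    isOpen_lt continuous_const (fP_continuous β)
  have hmem : {t : ℝ | 1/(2*β*K) < fP β t} ∈ nhds (0:ℝ) :=
    hopen.mem_nhds hgt
  obtain ⟨δ, hδ0, hδ⟩ := Metric.mem_nhds_iff.1 hmem
  set t0 : ℝ := δ/2 with ht0def
  have ht0 : 0 < t0 := by positivity
  have ht0mem : ∀ t : ℝ, 0 < t → t ≤ t0 → 1/(2*β*K) < fP β t := by
    intro t ht htle
    apply hδ
    rw [Metric.mem_ball, Real.dist_eq, sub_zero, abs_of_pos ht]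
    linarith
  -- x0 := t0 / (2βK) satisfies fm β (2βK x0) > x0
  set x0 : ℝ := t0 / (2*β*K) with hx0def
  have hx0 : 0 < x0 := by positivity
  have harg : 2*β*K*x0 = t0 := by rw [hx0def]; field_simp
  obtain ⟨ξ, hξ, heq⟩ := fm_slope (β := β) ht0
  have hψ0 : x0 < fm β (2*β*K*x0) := by
    rw [harg, heq]
    have := ht0mem ξ hξ.1 hξ.2.le
    calc x0 = t0 * (1/(2*β*K)) := by rw [hx0def]; ring
      _ < t0 * fP β ξ := mul_lt_mul_of_pos_left this ht0
  -- upper end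
  set x1 : ℝ := max 1 (x0 + 1) with hx1def
  have hx01 : x0 < x1 := lt_of_lt_of_le (by linarith) (le_max_right _ _)
  have hx11 : 1 ≤ x1 := le_max_left _ _
  have hψ1 : fm β (2*β*K*x1) < x1 := lt_of_lt_of_le (fm_lt_one β _) hx11
  -- IVT for ψ x = fm β (2βKx) - x
  have hcont : ContinuousOn (fun x : ℝ => fm β (2*β*K*x) - x) (Icc x0 x1) :=
    (((fm_continuous β).comp (by continuity)).sub continuous_id).continuousOn
  have h0mem : (0:ℝ) ∈ Icc (fm β (2*β*K*x1) - x1) (fm β (2*β*K*x0) - x0) :=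
    ⟨by linarith, by linarith⟩
  obtain ⟨m, hmmem, hmeq⟩ := intermediate_value_Icc' hx01.le hcont h0mem
  refine ⟨m, lt_of_lt_of_le hx0 hmmem.1, ?_⟩
  have : fm β (2*β*K*m) - m = 0 := hmeq
  linarith

lemma G_strictAntiOn_b {β K mz : ℝ} (hβ0 : 0 < β) (hβ4 : exp β ≤ 4) (hK0 : 0 < K)
    (hmz : 0 < mz) (hfix : fm β (2*β*K*mz) = mz) :
    StrictAntiOn (freeEnergyG β K) (Icc 0 mz) := by
  apply strictAntiOn_of_deriv_neg (convex_Icc 0 mz)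
  · intro x _
    exact (hasDerivAt_G β K x).continuousAt.continuousWithinAt
  · intro x hx
    rw [interior_Icc] at hx
    rw [(hasDerivAt_G β K x).deriv]
    have hbk : 0 < 2*β*K := by positivity
    have := sign_below hβ0 hβ4 hK0 hmz hfix hx.1 hx.2
    nlinarith [mul_lt_mul_of_pos_left this hbk]

lemma G_strictMonoOn_b {β K mz : ℝ} (hβ0 : 0 < β) (hβ4 : exp β ≤ 4) (hK0 : 0 < K)
    (hmz : 0 < mz) (hfix : fm β (2*β*K*mz) = mz) :
    StrictMonoOn (freeEnergyG β K) (Ici mz) := by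
  apply strictMonoOn_of_deriv_pos (convex_Ici mz)
  · intro x _
    exact (hasDerivAt_G β K x).continuousAt.continuousWithinAt
  · intro x hx
    rw [interior_Ici] at hx
    rw [(hasDerivAt_G β K x).deriv]
    have hbk : 0 < 2*β*K := by positivity
    have := sign_above hβ0 hβ4 hK0 hmz hfix hx
    nlinarith [mul_lt_mul_of_pos_left this hbk]

lemma G_min_strict {β K mz x : ℝ} (hβ0 : 0 < β) (hβ4 : exp β ≤ 4) (hK0 : 0 < K)
    (hmz : 0 < mz) (hfix : fm β (2*β*K*mz) = mz) (hx0 : 0 ≤ x) (hne : x ≠ mz) :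
    freeEnergyG β K mz < freeEnergyG β K x := by
  rcases lt_or_gt_of_ne hne with h | h
  · exact G_strictAntiOn_b hβ0 hβ4 hK0 hmz hfix ⟨hx0, h.le⟩ ⟨hmz.le, le_refl mz⟩ h
  · exact G_strictMonoOn_b hβ0 hβ4 hK0 hmz hfix (Set.mem_Ici.2 le_rfl)
      (Set.mem_Ici.2 h.le) h

lemma part_b {β K mz : ℝ} (hβ0 : 0 < β) (hβ4 : exp β ≤ 4) (hK0 : 0 < K)
    (hmz : 0 < mz) (hfix : fm β (2*β*K*mz) = mz) :
    {x : ℝ | ∀ y : ℝ, freeEnergyG β K x ≤ freeEnergyG β K y} = {mz, -mz} := by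
  have hmin : ∀ y : ℝ, freeEnergyG β K mz ≤ freeEnergyG β K y := by
    intro y
    rcases eq_or_ne |y| mz with h | h
    · rw [← G_abs β K y, h]
    · have := G_min_strict hβ0 hβ4 hK0 hmz hfix (abs_nonneg y) h
      rw [G_abs] at this
      exact this.le
  ext x
  simp only [Set.mem_setOf_eq, Set.mem_insert_iff, Set.mem_singleton_iff]
  constructor
  · intro hx
    have h1 : freeEnergyG β K x ≤ freeEnergyG β K mz := hx mz
    rcases eq_or_ne |x| mz with h | h
    · rcases abs_eq (le_of_lt hmz) |>.1 h with h' | h'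
      · exact Or.inl h'
      · exact Or.inr h'
    · exfalso
      have := G_min_strict hβ0 hβ4 hK0 hmz hfix (abs_nonneg x) h
      rw [G_abs] at this
      linarith
  · rintro (rfl | rfl)
    · exact hmin
    · intro y
      rw [G_even]
      exact hmin y

lemma fixed_unique {β K mz x : ℝ} (hβ0 : 0 < β) (hβ4 : exp β ≤ 4) (hK0 : 0 < K)
    (hmz : 0 < mz) (hfix : fm β (2*β*K*mz) = mz)
    (hx0 : 0 < x) (hxfix : fm β (2*β*K*x) = x) : x = mz := by
  rcases lt_trichotomy x mz with h | h | h
  · have := sign_below hβ0 hβ4 hK0 hmz hfix hx0 h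
    rw [hxfix] at this
    exact absurd this (lt_irrefl x)
  · exact h
  · have := sign_above hβ0 hβ4 hK0 hmz hfix h
    rw [hxfix] at this
    exact absurd this (lt_irrefl x)

end S12

open S12 in
/-- the continuous bifurcation of the set of global minimum points
of `G_{β,K}` at `K = K(β)` for `0 < β ≤ β_c` (second-order phase transition). -/
theorem stmt12 (β : ℝ) (hβ0 : 0 < β) (hβ : β ≤ Real.log 4) :
    (∀ K : ℝ, 0 < K → K ≤ Kcurve β →
      {x : ℝ | ∀ y : ℝ, freeEnergyG β K x ≤ freeEnergyG β K y} = {0}) ∧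
    ∃ m : ℝ → ℝ,
      (∀ K : ℝ, Kcurve β < K →
        0 < m K ∧
          {x : ℝ | ∀ y : ℝ, freeEnergyG β K x ≤ freeEnergyG β K y} = {m K, -(m K)}) ∧
      StrictMonoOn m (Set.Ioi (Kcurve β)) ∧
      ContinuousOn m (Set.Ioi (Kcurve β)) ∧
      Tendsto m (nhdsWithin (Kcurve β) (Set.Ioi (Kcurve β))) (nhds 0) := by
  classical
  have hβ4 : Real.exp β ≤ 4 := by
    calc Real.exp β ≤ Real.exp (Real.log 4) := Real.exp_le_exp.2 hβ
      _ = 4 := Real.exp_log (by norm_num)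
  refine ⟨fun K hK0 hKle => part_a hβ0 hβ4 hK0 hKle, ?_⟩
  set m : ℝ → ℝ :=
    fun K => if h : Kcurve β < K then (exists_fixed hβ0 hβ4 h).choose else 0 with hmdef
  have hmspec : ∀ K : ℝ, Kcurve β < K → 0 < m K ∧ fm β (2*β*K*(m K)) = m K := by
    intro K hK
    rw [hmdef]
    simp only [dif_pos hK]
    exact (exists_fixed hβ0 hβ4 hK).choose_spec
  have hK0of : ∀ {K : ℝ}, Kcurve β < K → 0 < K :=
    fun hK => lt_trans (Kcurve_pos hβ0) hK
  refine ⟨m, ?_, ?_, ?_, ?_⟩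
  · intro K hK
    obtain ⟨hpos, hfix⟩ := hmspec K hK
    exact ⟨hpos, part_b hβ0 hβ4 (hK0of hK) hpos hfix⟩
  · intro K1 h1 K2 h2 h12
    obtain ⟨hp1, hf1⟩ := hmspec K1 h1
    obtain ⟨hp2, hf2⟩ := hmspec K2 h2
    have hK20 : 0 < K2 := hK0of h2
    have hlt : m K1 < fm β (2*β*K2*(m K1)) := by
      calc m K1 = fm β (2*β*K1*(m K1)) := hf1.symm
        _ < fm β (2*β*K2*(m K1)) := fm_strictMono β (by
            nlinarith [mul_pos (mul_pos hβ0 (sub_pos.2 h12)) hp1])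
    rcases lt_trichotomy (m K1) (m K2) with h | h | h
    · exact h
    · exfalso
      rw [h, hf2] at hlt
      exact lt_irrefl _ hlt
    · exfalso
      have := sign_above hβ0 hβ4 hK20 hp2 hf2 h
      linarith
  · intro K0 hK0mem
    obtain ⟨hp0, hf0⟩ := hmspec K0 hK0mem
    have hK0pos : 0 < K0 := hK0of hK0mem
    show Tendsto m (nhdsWithin K0 (Set.Ioi (Kcurve β))) (nhds (m K0))
    rw [Metric.tendsto_nhds]
    intro ε hε
    set ε' := min (ε/2) (m K0 / 2) with hε'def
    have hε'ε : ε' ≤ ε/2 := min_le_left _ _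
    have hε'm : ε' ≤ m K0 / 2 := min_le_right _ _
    have hε'0 : 0 < ε' := lt_min (by linarith) (by linarith)
    set a := m K0 - ε' with hadef
    set b := m K0 + ε' with hbdef
    have ha0 : 0 < a := by rw [hadef]; linarith
    have hb0 : 0 < b := by rw [hbdef]; linarith
    have haK0 : a < fm β (2*β*K0*a) :=
      sign_below hβ0 hβ4 hK0pos hp0 hf0 ha0 (by rw [hadef]; linarith)
    have hbK0 : fm β (2*β*K0*b) < b :=
      sign_above hβ0 hβ4 hK0pos hp0 hf0 (by rw [hbdef]; linarith)
    have hopen : IsOpen {K : ℝ | a < fm β (2*β*K*a) ∧ fm β (2*β*K*b) < b} := by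
      apply IsOpen.inter
      · exact isOpen_lt continuous_const (cont_aux β (2*β) a)
      · exact isOpen_lt (cont_aux β (2*β) b) continuous_const
    have hmem : {K : ℝ | a < fm β (2*β*K*a) ∧ fm β (2*β*K*b) < b} ∈
        nhdsWithin K0 (Set.Ioi (Kcurve β)) :=
      mem_nhdsWithin_of_mem_nhds (hopen.mem_nhds ⟨haK0, hbK0⟩)
    filter_upwards [hmem, self_mem_nhdsWithin] with K hKset hKIoi
    obtain ⟨hpK, hfK⟩ := hmspec K hKIoi
    have hKpos : 0 < K := hK0of hKIoi
    have h1 : a < m K := by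
      rcases lt_trichotomy a (m K) with h | h | h
      · exact h
      · exfalso
        have := hKset.1
        rw [h, hfK] at this
        exact lt_irrefl _ this
      · exfalso
        have := sign_above hβ0 hβ4 hKpos hpK hfK h
        linarith [hKset.1]
    have h2 : m K < b := by
      rcases lt_trichotomy (m K) b with h | h | h
      · exact h
      · exfalso
        have := hKset.2
        rw [← h, hfK] at this
        exact lt_irrefl _ this
      · exfalso
        have := sign_below hβ0 hβ4 hKpos hpK hfK hb0 h
        linarith [hKset.2]
    rw [Real.dist_eq, abs_lt]
    constructor
    · rw [hadef] at h1; linarith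
    · rw [hbdef] at h2; linarith
  · rw [Metric.tendsto_nhds]
    intro ε hε
    set e := ε/2 with hedef
    have he0 : 0 < e := by rw [hedef]; linarith
    have hKc0 : 0 < Kcurve β := Kcurve_pos hβ0
    have harg : 0 < 2*β*(Kcurve β)*e := by positivity
    have hlt : fm β (2*β*(Kcurve β)*e) < e := by
      have hl := fm_lt_lin hβ4 harg
      have heq : 2/(Real.exp β + 2) * (2*β*(Kcurve β)*e) = e := by
        rw [Kcurve]
        have : Real.exp β + 2 ≠ 0 := by positivity
        field_simp
        ring
      rw [heq] at hl
      exact hl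
    have hopen : IsOpen {K : ℝ | fm β (2*β*K*e) < e} :=
      isOpen_lt (cont_aux β (2*β) e) continuous_const
    have hmem : {K : ℝ | fm β (2*β*K*e) < e} ∈
        nhdsWithin (Kcurve β) (Set.Ioi (Kcurve β)) :=
      mem_nhdsWithin_of_mem_nhds (hopen.mem_nhds hlt)
    filter_upwards [hmem, self_mem_nhdsWithin] with K hKset hKIoi
    obtain ⟨hpK, hfK⟩ := hmspec K hKIoi
    have hKpos : 0 < K := hK0of hKIoi
    have hme : m K < e := by
      rcases lt_trichotomy (m K) e with h | h | h
      · exact h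
      · exfalso
        have := hKset
        rw [← h, hfK] at this
        exact lt_irrefl _ this
      · exfalso
        have := sign_below hβ0 hβ4 hKpos hpK hfK he0 h
        linarith [hKset]
    rw [Real.dist_eq, sub_zero, abs_of_pos hpK]
    rw [hedef] at hme
    linarith
end

section
/- Let β satisfy 0 < β ≤ β_c = log 4, and let (β_n, K_n) be a sequence of pairs of positive real numbers with β_n → β and K_n → K(β) as n → ∞. Suppose that for each n, m_n is a global minimum point of G_{β_n,K_n} over ℝ, i.e., G_{β_n,K_n}(m_n) ≤ G_{β_n,K_n}(y) for all y ∈ ℝ. Then m_n → 0 as n → ∞. -/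
open Real Filter

/-- helper: if f 0 = 0 and f has positive derivative on (0,∞), then f > 0 there. -/
lemma pos_of_deriv_pos (f f' : ℝ → ℝ) (hd : ∀ t, HasDerivAt f (f' t) t)
    (h0 : f 0 = 0) (hp : ∀ t, 0 < t → 0 < f' t) : ∀ t, 0 < t → 0 < f t := by
  intro t ht
  have hmono : StrictMonoOn f (Set.Ici (0:ℝ)) := by
    apply strictMonoOn_of_deriv_pos (convex_Ici 0)
    · exact (Continuous.continuousOn (by
        exact continuous_iff_continuousAt.2 fun x => (hd x).continuousAt))
    · intro x hx
      rw [interior_Ici] at hx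
      rw [(hd x).deriv]
      exact hp x hx
  have := hmono (Set.self_mem_Ici) (Set.mem_Ici.2 ht.le) ht
  rwa [h0] at this

lemma sinh_lt_self_mul_cosh {t : ℝ} (ht : 0 < t) : Real.sinh t < t * Real.cosh t := by
  have h := pos_of_deriv_pos (fun t => t * Real.cosh t - Real.sinh t)
    (fun t => t * Real.sinh t)
    (fun t => by
      have h1 := (hasDerivAt_id t).mul (Real.hasDerivAt_cosh t)
      have h2 := Real.hasDerivAt_sinh t
      have h3 := h1.sub h2
      refine h3.congr_deriv ?_
      simp only [id_eq]; ring)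
    (by simp) (fun t ht => mul_pos ht (Real.sinh_pos_iff.2 ht)) t ht
  linarith

lemma aux_p_pos {t : ℝ} (ht : 0 < t) : 0 < 2*t*Real.sinh t - 4*Real.cosh t + 4 := by
  have h := pos_of_deriv_pos (fun t => 2*t*Real.sinh t - 4*Real.cosh t + 4)
    (fun t => 2*t*Real.cosh t - 2*Real.sinh t)
    (fun t => by
      have h1 := ((hasDerivAt_id t).const_mul (2:ℝ)).mul (Real.hasDerivAt_sinh t)
      have h2 := (Real.hasDerivAt_cosh t).const_mul (4:ℝ)
      have h3 := (h1.sub h2).add_const (4:ℝ)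
      refine h3.congr_deriv ?_
      simp only [id_eq]; ring)
    (by simp) (fun t ht => by show 0 < 2*t*Real.cosh t - 2*Real.sinh t; have := sinh_lt_self_mul_cosh ht; linarith) t ht
  linarith

lemma aux_g_pos {t : ℝ} (ht : 0 < t) : 0 < 2*t*Real.cosh t - 6*Real.sinh t + 4*t := by
  have h := pos_of_deriv_pos (fun t => 2*t*Real.cosh t - 6*Real.sinh t + 4*t)
    (fun t => 2*t*Real.sinh t - 4*Real.cosh t + 4)
    (fun t => by
      have h1 := ((hasDerivAt_id t).const_mul (2:ℝ)).mul (Real.hasDerivAt_cosh t)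
      have h2 := (Real.hasDerivAt_sinh t).const_mul (6:ℝ)
      have h3 := (hasDerivAt_id t).const_mul (4:ℝ)
      have h4 := (h1.sub h2).add h3
      refine h4.congr_deriv ?_
      simp only [id_eq]; ring)
    (by simp) (fun t ht => aux_p_pos ht) t ht
  linarith

lemma F_pos {a : ℝ} (ha3 : 3 < a) (ha6 : a ≤ 6) {t : ℝ} (ht : 0 < t) :
    0 < t^2/a - Real.log (a - 2 + 2*Real.cosh t) + Real.log a := by
  have ha0 : 0 < a := by linarith
  have hD : ∀ s : ℝ, 0 < a - 2 + 2*Real.cosh s := fun s => by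
    have := Real.one_le_cosh s; linarith
  have h := pos_of_deriv_pos
    (fun t => t^2/a - Real.log (a - 2 + 2*Real.cosh t) + Real.log a)
    (fun t => 2*t/a - 2*Real.sinh t/(a - 2 + 2*Real.cosh t))
    (fun t => by
      have h1 := (hasDerivAt_pow 2 t).div_const a
      have h2 : HasDerivAt (fun s => a - 2 + 2*Real.cosh s) (2*Real.sinh t) t :=
        ((Real.hasDerivAt_cosh t).const_mul (2:ℝ)).const_add (a-2)
      have h3 := (h2.log (ne_of_gt (hD t)))
      have h4 := (h1.sub h3).add_const (Real.log a)
      refine h4.congr_deriv ?_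
      simp)
    (by simp)
    (fun t ht => by
      show 0 < 2*t/a - 2*Real.sinh t/(a - 2 + 2*Real.cosh t)
      rw [sub_pos, div_lt_div_iff₀ (hD t) ha0]
      have hg := aux_g_pos ht
      have hs : t ≤ Real.sinh t := (Real.self_lt_sinh_iff.2 ht).le
      nlinarith [mul_nonneg (by linarith : (0:ℝ) ≤ 6 - a) (by linarith : 0 ≤ Real.sinh t - t)])
    t ht
  simpa using h

/-- Key inequality at the limit point. -/
lemma key_pos {a : ℝ} (ha3 : 3 < a) (ha6 : a ≤ 6) {t : ℝ} (ht : t ≠ 0) :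
    Real.log ((a - 2 + 2*Real.cosh t)/a) < t^2/a := by
  have ha0 : 0 < a := by linarith
  have hD : 0 < a - 2 + 2*Real.cosh t := by have := Real.one_le_cosh t; linarith
  have habs : 0 < |t| := abs_pos.2 ht
  have h := F_pos ha3 ha6 habs
  rw [Real.cosh_abs, sq_abs] at h
  rw [Real.log_div (ne_of_gt hD) (ne_of_gt ha0)]
  linarith

lemma cgf_zero (β : ℝ) : cgf β 0 = 0 := by
  have h : (1 + Real.exp (-β) * (Real.exp 0 + Real.exp (-0))) = 1 + 2 * Real.exp (-β) := by
    simp; ring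
  rw [cgf, h, div_self (by positivity), Real.log_one]

lemma freeEnergyG_zero (β K : ℝ) : freeEnergyG β K 0 = 0 := by
  simp [freeEnergyG, cgf_zero]

lemma cgf_le_abs (β t : ℝ) : cgf β t ≤ |t| := by
  have hden : (0:ℝ) < 1 + 2 * Real.exp (-β) := by positivity
  have hnum : (0:ℝ) < 1 + Real.exp (-β) * (Real.exp t + Real.exp (-t)) := by positivity
  rw [cgf, Real.log_le_iff_le_exp (by positivity), div_le_iff₀ hden]
  have h1 : Real.exp t ≤ Real.exp |t| := Real.exp_le_exp.2 (le_abs_self t)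
  have h2 : Real.exp (-t) ≤ Real.exp |t| := Real.exp_le_exp.2 (neg_le_abs t)
  have h3 : (1:ℝ) ≤ Real.exp |t| := Real.one_le_exp (abs_nonneg t)
  have h4 : (0:ℝ) < Real.exp (-β) := Real.exp_pos _
  nlinarith

lemma minimizer_bound {b K x : ℝ} (hb : 0 < b) (hK : 0 < K)
    (h : freeEnergyG b K x ≤ 0) : |x| ≤ 2 := by
  have hbK : (0:ℝ) < b * K := mul_pos hb hK
  have h1 : cgf b (2 * b * K * x) ≤ |2 * b * K * x| := cgf_le_abs _ _
  have h2 : |2 * b * K * x| = 2 * (b*K) * |x| := by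
    rw [abs_mul, abs_of_pos (by positivity : (0:ℝ) < 2 * b * K)]; ring
  have h3 : b * K * x ^ 2 ≤ 2 * (b*K) * |x| := by
    rw [freeEnergyG] at h; rw [h2] at h1; linarith
  have h4 : x ^ 2 = |x| ^ 2 := (sq_abs x).symm
  have h5 : |x| ^ 2 ≤ 2 * |x| := by
    have := (mul_le_mul_iff_right₀ hbK).1 (by nlinarith : b * K * (|x|^2) ≤ b * K * (2 * |x|))
    linarith
  nlinarith [abs_nonneg x]

lemma G_pos_limit {β : ℝ} (hβ0 : 0 < β) (hβ : β ≤ Real.log 4) {x : ℝ} (hx : x ≠ 0) :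
    0 < freeEnergyG β (Kcurve β) x := by
  set a : ℝ := Real.exp β + 2 with ha
  have hea : (0:ℝ) < Real.exp β := Real.exp_pos β
  have ha3 : 3 < a := by
    have : (1:ℝ) < Real.exp β := by
      rw [show (1:ℝ) = Real.exp 0 by simp]; exact Real.exp_lt_exp.2 hβ0
    simp only [ha]; linarith
  have ha6 : a ≤ 6 := by
    have : Real.exp β ≤ 4 := by
      calc Real.exp β ≤ Real.exp (Real.log 4) := Real.exp_le_exp.2 hβ
        _ = 4 := Real.exp_log (by norm_num)
    simp only [ha]; linarith
  have ha0 : (0:ℝ) < a := by linarith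
  have hbK : β * Kcurve β = a / 4 := by
    rw [Kcurve]; field_simp; rw [ha]
  have ht : 2 * β * Kcurve β * x = a * x / 2 := by
    have : 2 * β * Kcurve β * x = 2 * (β * Kcurve β) * x := by ring
    rw [this, hbK]; ring
  set t : ℝ := a * x / 2 with htdef
  have htne : t ≠ 0 := by
    rw [htdef]
    exact div_ne_zero (mul_ne_zero (ne_of_gt ha0) hx) two_ne_zero
  have hcgf : cgf β t = Real.log ((a - 2 + 2 * Real.cosh t) / a) := by
    rw [cgf]
    congr 1
    rw [Real.cosh_eq, Real.exp_neg β]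
    have h2 : a - 2 = Real.exp β := by simp [ha]
    rw [h2]
    field_simp
    exact ha
  have hkey := key_pos ha3 ha6 htne
  have hval : t ^ 2 / a = β * Kcurve β * x ^ 2 := by
    rw [htdef, hbK]; field_simp; ring
  rw [freeEnergyG, ht, hcgf]
  linarith [hkey, hval]

lemma G_cont : Continuous (fun p : ℝ × ℝ × ℝ => freeEnergyG p.1 p.2.1 p.2.2) := by
  unfold freeEnergyG cgf
  have hT : Continuous (fun p : ℝ × ℝ × ℝ => 2 * p.1 * p.2.1 * p.2.2) := by fun_prop
  have hnum : Continuous (fun p : ℝ × ℝ × ℝ =>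
      1 + Real.exp (-p.1) * (Real.exp (2 * p.1 * p.2.1 * p.2.2)
        + Real.exp (-(2 * p.1 * p.2.1 * p.2.2)))) := by fun_prop
  have hden : Continuous (fun p : ℝ × ℝ × ℝ => 1 + 2 * Real.exp (-p.1)) := by fun_prop
  have hq : Continuous (fun p : ℝ × ℝ × ℝ =>
      (1 + Real.exp (-p.1) * (Real.exp (2 * p.1 * p.2.1 * p.2.2)
        + Real.exp (-(2 * p.1 * p.2.1 * p.2.2)))) / (1 + 2 * Real.exp (-p.1))) :=
    hnum.div hden (fun p => by positivity)
  have hlog : Continuous (fun p : ℝ × ℝ × ℝ => Real.log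
      ((1 + Real.exp (-p.1) * (Real.exp (2 * p.1 * p.2.1 * p.2.2)
        + Real.exp (-(2 * p.1 * p.2.1 * p.2.2)))) / (1 + 2 * Real.exp (-p.1)))) :=
    hq.log (fun p => by positivity)
  exact (by fun_prop : Continuous (fun p : ℝ × ℝ × ℝ => p.1 * p.2.1 * p.2.2 ^ 2)).sub hlog

/-- if `(β_n, K_n)` is a positive sequence converging to a
second-order point or to the tricritical point, then any sequence of global
minimum points of `G_{β_n,K_n}` converges to `0`. -/
theorem stmt13 (β : ℝ) (hβ0 : 0 < β) (hβ : β ≤ Real.log 4)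
    (βn Kn : ℕ → ℝ) (hpos : ∀ n : ℕ, 0 < βn n ∧ 0 < Kn n)
    (hβn : Tendsto βn atTop (nhds β)) (hKn : Tendsto Kn atTop (nhds (Kcurve β)))
    (m : ℕ → ℝ)
    (hm : ∀ n : ℕ, ∀ y : ℝ, freeEnergyG (βn n) (Kn n) (m n) ≤ freeEnergyG (βn n) (Kn n) y) :
    Tendsto m atTop (nhds 0) := by
  have hbound : ∀ n, |m n| ≤ 2 := by
    intro n
    have h0 := hm n 0
    rw [freeEnergyG_zero] at h0
    exact minimizer_bound (hpos n).1 (hpos n).2 h0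
  apply tendsto_of_subseq_tendsto
  intro ns hns
  have hmem : ∀ k, m (ns k) ∈ Set.Icc (-2:ℝ) 2 := fun k => abs_le.1 (hbound (ns k))
  obtain ⟨x0, _, φ, hφ, hconv⟩ :=
    tendsto_subseq_of_bounded (Metric.isBounded_Icc (-2:ℝ) 2) hmem
  refine ⟨φ, ?_⟩
  have hψ : Tendsto (fun k => ns (φ k)) atTop atTop := hns.comp hφ.tendsto_atTop
  have hconv' : Tendsto (fun k => m (ns (φ k))) atTop (nhds x0) := hconv
  have hβψ : Tendsto (fun k => βn (ns (φ k))) atTop (nhds β) := hβn.comp hψ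
  have hKψ : Tendsto (fun k => Kn (ns (φ k))) atTop (nhds (Kcurve β)) := hKn.comp hψ
  have hx0 : x0 = 0 := by
    by_contra hx0ne
    have htriple : Tendsto (fun k => (βn (ns (φ k)), Kn (ns (φ k)), m (ns (φ k))))
        atTop (nhds (β, Kcurve β, x0)) := hβψ.prodMk_nhds (hKψ.prodMk_nhds hconv')
    have hGlim : Tendsto (fun k => freeEnergyG (βn (ns (φ k))) (Kn (ns (φ k))) (m (ns (φ k))))
        atTop (nhds (freeEnergyG β (Kcurve β) x0)) :=
      (G_cont.tendsto _).comp htriple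
    have htriple0 : Tendsto (fun k => (βn (ns (φ k)), Kn (ns (φ k)), (0:ℝ)))
        atTop (nhds (β, Kcurve β, 0)) := hβψ.prodMk_nhds (hKψ.prodMk_nhds tendsto_const_nhds)
    have hG0 : Tendsto (fun k => freeEnergyG (βn (ns (φ k))) (Kn (ns (φ k))) 0)
        atTop (nhds (freeEnergyG β (Kcurve β) 0)) := (G_cont.tendsto _).comp htriple0
    have hle : freeEnergyG β (Kcurve β) x0 ≤ freeEnergyG β (Kcurve β) 0 :=
      le_of_tendsto_of_tendsto' hGlim hG0 (fun k => hm (ns (φ k)) 0)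
    rw [freeEnergyG_zero] at hle
    exact absurd hle (not_le.2 (G_pos_limit hβ0 hβ hx0ne))
  rw [hx0] at hconv'
  exact hconv'
end

section
/- Let β satisfy 0 < β ≤ β_c = log 4, and let (β_n, K_n) be a sequence of pairs of positive real numbers converging to (β, K(β)). Fix γ > 0 and v ∈ ℝ, and let g : ℝ → ℝ be an even polynomial function of degree 4 or 6 with g(0) = 0 and g(x) → ∞ as |x| → ∞, whose set of global minimum points over ℝ is either {x̄, −x̄} or {0, x̄, −x̄} for some x̄ > 0. Assume: (i) n^v·G_{β_n,K_n}(x/n^γ) → g(x) as n → ∞, uniformly for x in every compact subset of ℝ; (ii) there exist a polynomial H with H(x) → ∞ as |x| → ∞ and R > 0 such that for all sufficiently large n and all x ∈ ℝ with |x| < R·n^γ one has n^v·G_{β_n,K_n}(x/n^γ) ≥ H(x); (iii) for all sufficiently large n there exists m_n > 0 that is both a global minimum point of G_{β_n,K_n} over ℝ and the largest real zero of the derivative G'_{β_n,K_n}; and (iv) m_n → 0 as n → ∞. Then n^γ·m_n → x̄ as n → ∞; i.e., m_n ∼ x̄/n^γ. -/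
open Real Filter

lemma cont_cgf (β : ℝ) : Continuous (cgf β) := by
  rw [continuous_iff_continuousAt]
  intro t
  unfold cgf
  exact ContinuousAt.log (by fun_prop) (by positivity)

lemma cont_G (β K : ℝ) : Continuous (freeEnergyG β K) := by
  unfold freeEnergyG
  exact (by fun_prop : Continuous fun x : ℝ => β * K * x ^ 2).sub
    ((cont_cgf β).comp (by fun_prop))

/-- the main asymptotic theorem. Under uniform convergence of the
scaled free-energy functionals to a Ginzburg--Landau polynomial `g` with unique
positive global minimum point `x̄`, a lower polynomial bound, and the
characterization of `m_n` as positive global minimum point and largest critical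
point, one has `n^γ · m_n → x̄`. -/
theorem stmt14 (β : ℝ) (hβ0 : 0 < β) (hβ : β ≤ Real.log 4)
    (βn Kn : ℕ → ℝ) (hpos : ∀ n : ℕ, 0 < βn n ∧ 0 < Kn n)
    (hβn : Tendsto βn atTop (nhds β)) (hKn : Tendsto Kn atTop (nhds (Kcurve β)))
    (γ v : ℝ) (hγ : 0 < γ)
    (g : ℝ → ℝ) (P : Polynomial ℝ) (hgP : ∀ x : ℝ, g x = P.eval x)
    (hdeg : P.natDegree = 4 ∨ P.natDegree = 6)
    (heven : ∀ x : ℝ, g (-x) = g x) (hg0 : g 0 = 0)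
    (hginf : Tendsto g (cocompact ℝ) atTop)
    (xbar : ℝ) (hxbar : 0 < xbar)
    (hminset :
      {x : ℝ | ∀ y : ℝ, g x ≤ g y} = {xbar, -xbar} ∨
      {x : ℝ | ∀ y : ℝ, g x ≤ g y} = {0, xbar, -xbar})
    (hunif : ∀ C : Set ℝ, IsCompact C →
      TendstoUniformlyOn
        (fun (n : ℕ) (x : ℝ) =>
          (n : ℝ) ^ v * freeEnergyG (βn n) (Kn n) (x / (n : ℝ) ^ γ))
        g atTop C)
    (H : ℝ → ℝ) (Q : Polynomial ℝ) (hHQ : ∀ x : ℝ, H x = Q.eval x)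
    (hHinf : Tendsto H (cocompact ℝ) atTop)
    (R : ℝ) (hR : 0 < R)
    (hlower : ∀ᶠ n : ℕ in atTop, ∀ x : ℝ, |x| < R * (n : ℝ) ^ γ →
      H x ≤ (n : ℝ) ^ v * freeEnergyG (βn n) (Kn n) (x / (n : ℝ) ^ γ))
    (m : ℕ → ℝ)
    (hm : ∀ᶠ n : ℕ in atTop,
      0 < m n ∧
      (∀ y : ℝ, freeEnergyG (βn n) (Kn n) (m n) ≤ freeEnergyG (βn n) (Kn n) y) ∧
      IsGreatest {x : ℝ | deriv (freeEnergyG (βn n) (Kn n)) x = 0} (m n))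
    (hm0 : Tendsto m atTop (nhds 0)) :
    Tendsto (fun n : ℕ => (n : ℝ) ^ γ * m n) atTop (nhds xbar) := by
  have hgc : Continuous g := by
    have hgfun : g = fun x => P.eval x := funext hgP
    rw [hgfun]; exact P.continuous
  have hgmin : ∀ y, g xbar ≤ g y := by
    have hxm : xbar ∈ {x : ℝ | ∀ y, g x ≤ g y} := by
      rcases hminset with h | h <;> rw [h] <;> simp
    exact hxm
  have hstrict : ∀ z : ℝ, z ≠ 0 → z ≠ xbar → z ≠ -xbar → g xbar < g z := by
    intro z h0 h1 h2
    by_contra hle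
    push_neg at hle
    have hz : z ∈ {x : ℝ | ∀ y, g x ≤ g y} := fun y => hle.trans (hgmin y)
    rcases hminset with h | h <;> rw [h] at hz <;>
      simp only [Set.mem_insert_iff, Set.mem_singleton_iff] at hz <;> tauto
  rw [Metric.tendsto_nhds]
  intro ε hε
  have hmin_pos : 0 < min ε xbar := lt_min hε hxbar
  set ε₀ : ℝ := min ε xbar / 2 with hε₀def
  have hε₀pos : 0 < ε₀ := by positivity
  have hε₀ε : ε₀ < ε := by have := min_le_left ε xbar; linarith
  have hε₀x : ε₀ < xbar := by have := min_le_right ε xbar; linarith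
  set a : ℝ := xbar - ε₀ with hadef
  set b : ℝ := xbar + ε₀ with hbdef
  have ha0 : 0 < a := by simp only [hadef]; linarith
  have hab : a < b := by simp only [hadef, hbdef]; linarith
  have haxb : a < xbar ∧ xbar < b := by constructor <;> simp only [hadef, hbdef] <;> linarith
  have hga : g xbar < g a :=
    hstrict a ha0.ne' (ne_of_lt haxb.1) (ne_of_gt (by linarith))
  have hgb : g xbar < g b :=
    hstrict b (by positivity) (ne_of_gt haxb.2) (ne_of_gt (by linarith))
  -- boundedness via H
  have hH1 : ∀ᶠ x : ℝ in cocompact ℝ, g xbar + 1 ≤ H x :=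
    hHinf.eventually (eventually_ge_atTop (g xbar + 1))
  obtain ⟨K0, hK0c, hK0⟩ := Filter.hasBasis_cocompact.eventually_iff.mp hH1
  obtain ⟨M0, hM0⟩ := hK0c.isBounded.subset_closedBall (0 : ℝ)
  set M : ℝ := max M0 (b + 1) with hMdef
  have hbM : b + 1 ≤ M := le_max_right _ _
  have hM0M : M0 ≤ M := le_max_left _ _
  obtain ⟨p, hpmem, hpmin'⟩ := (isCompact_Icc (a := b) (b := M)).exists_isMinOn
    ⟨b, by constructor <;> linarith⟩ hgc.continuousOn
  have hpmin := isMinOn_iff.mp hpmin'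
  have hpb : b ≤ p := hpmem.1
  have hgp : g xbar < g p :=
    hstrict p (ne_of_gt (by linarith)) (ne_of_gt (by linarith)) (ne_of_gt (by linarith))
  set δ : ℝ := min 1 (min (g a - g xbar) (min (g b - g xbar) (g p - g xbar))) with hδdef
  have hδpos : 0 < δ :=
    lt_min one_pos (lt_min (by linarith) (lt_min (by linarith) (by linarith)))
  have hδ1 : δ ≤ 1 := min_le_left _ _
  have hδa : δ ≤ g a - g xbar := (min_le_right _ _).trans (min_le_left _ _)
  have hδb : δ ≤ g b - g xbar :=
    (min_le_right _ _).trans ((min_le_right _ _).trans (min_le_left _ _))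
  have hδp : δ ≤ g p - g xbar :=
    (min_le_right _ _).trans ((min_le_right _ _).trans (min_le_right _ _))
  have hunifC := Metric.tendstoUniformlyOn_iff.mp
    (hunif (Set.Icc (-(M + 1)) (M + 1)) isCompact_Icc) (δ / 3) (by positivity)
  have hmR := (Metric.tendsto_nhds.mp hm0) R hR
  filter_upwards [hlower, hm, hmR, hunifC, eventually_ge_atTop 1] with n hlow hmn hmRn hunifn hn1
  obtain ⟨hmpos, hmglob, hmgreat⟩ := hmn
  set Gn : ℝ → ℝ := freeEnergyG (βn n) (Kn n) with hGndef
  have hnR : (1 : ℝ) ≤ (n : ℝ) := by exact_mod_cast hn1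
  set A : ℝ := (n : ℝ) ^ γ with hAdef
  have hApos : (0 : ℝ) < A := Real.rpow_pos_of_pos (by linarith) γ
  have hvpos : (0 : ℝ) < (n : ℝ) ^ v := Real.rpow_pos_of_pos (by linarith) v
  have hmabs : |m n| < R := by rwa [Real.dist_eq, sub_zero] at hmRn
  have hxbarC : xbar ∈ Set.Icc (-(M + 1)) (M + 1) := by constructor <;> linarith
  have haC : a ∈ Set.Icc (-(M + 1)) (M + 1) := by constructor <;> linarith
  have hbC : b ∈ Set.Icc (-(M + 1)) (M + 1) := by constructor <;> linarith
  have hcancel : A * m n / A = m n := by field_simp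
  -- value at xbar
  have hFx := hunifn xbar hxbarC
  rw [Real.dist_eq] at hFx
  obtain ⟨hFx1, hFx2⟩ := abs_sub_lt_iff.mp hFx
  -- global-min comparison scaled
  have hGm_le : (n : ℝ) ^ v * Gn (m n) ≤ (n : ℝ) ^ v * Gn (xbar / A) :=
    mul_le_mul_of_nonneg_left (hmglob _) hvpos.le
  -- boundedness of A * m n
  have hAmR : |A * m n| < R * A := by
    rw [abs_mul, abs_of_pos hApos, mul_comm]
    exact mul_lt_mul_of_pos_right hmabs hApos
  have hHle := hlow (A * m n) hAmR
  rw [hcancel] at hHle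
  have hHlt : H (A * m n) < g xbar + 1 := by linarith
  have hAmK0 : A * m n ∈ K0 := by
    by_contra hc
    exact absurd (hK0 hc) (by linarith)
  have hAmM : |A * m n| ≤ M := by
    have hmem := hM0 hAmK0
    rw [Metric.mem_closedBall, Real.dist_eq, sub_zero] at hmem
    linarith
  obtain ⟨hAm1, hAm2⟩ := abs_le.mp hAmM
  have hAmC : A * m n ∈ Set.Icc (-(M + 1)) (M + 1) := by constructor <;> linarith
  -- upper bound: A * m n < b
  have hupper : A * m n < b := by
    by_contra hc
    push_neg at hc
    have hmem : A * m n ∈ Set.Icc b M := ⟨hc, hAm2⟩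
    have h1 := hpmin (A * m n) hmem
    have h2 := hunifn (A * m n) hAmC
    rw [Real.dist_eq, hcancel] at h2
    obtain ⟨h21, h22⟩ := abs_sub_lt_iff.mp h2
    linarith
  -- lower bound: a ≤ A * m n
  have hcontGn : Continuous Gn := cont_G _ _
  have hdivab : a / A ≤ b / A := by
    have h := mul_le_mul_of_nonneg_right hab.le (inv_nonneg.mpr hApos.le)
    simpa [div_eq_mul_inv] using h
  have hdivax : a / A ≤ xbar / A := by
    have h := mul_le_mul_of_nonneg_right haxb.1.le (inv_nonneg.mpr hApos.le)
    simpa [div_eq_mul_inv] using h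
  have hdivxb : xbar / A ≤ b / A := by
    have h := mul_le_mul_of_nonneg_right haxb.2.le (inv_nonneg.mpr hApos.le)
    simpa [div_eq_mul_inv] using h
  obtain ⟨y0, hy0mem, hy0min'⟩ := (isCompact_Icc (a := a / A) (b := b / A)).exists_isMinOn
    ⟨a / A, le_refl _, hdivab⟩ hcontGn.continuousOn
  have hy0min := isMinOn_iff.mp hy0min'
  have hFa := hunifn a haC
  rw [Real.dist_eq] at hFa
  obtain ⟨hFa1, hFa2⟩ := abs_sub_lt_iff.mp hFa
  have hFb := hunifn b hbC
  rw [Real.dist_eq] at hFb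
  obtain ⟨hFb1, hFb2⟩ := abs_sub_lt_iff.mp hFb
  have hGxa : Gn (xbar / A) < Gn (a / A) := by
    have h : (n : ℝ) ^ v * Gn (xbar / A) < (n : ℝ) ^ v * Gn (a / A) := by linarith
    exact (mul_lt_mul_iff_right₀ hvpos).mp h
  have hGxb : Gn (xbar / A) < Gn (b / A) := by
    have h : (n : ℝ) ^ v * Gn (xbar / A) < (n : ℝ) ^ v * Gn (b / A) := by linarith
    exact (mul_lt_mul_iff_right₀ hvpos).mp h
  have hy0x : Gn y0 ≤ Gn (xbar / A) := hy0min _ ⟨hdivax, hdivxb⟩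
  have hy0a : a / A < y0 := by
    rcases lt_or_eq_of_le hy0mem.1 with h | h
    · exact h
    · rw [← h] at hy0x; linarith
  have hy0b : y0 < b / A := by
    rcases lt_or_eq_of_le hy0mem.2 with h | h
    · exact h
    · rw [h] at hy0x; linarith
  have hloc : IsLocalMin Gn y0 :=
    Filter.eventually_of_mem (Icc_mem_nhds hy0a hy0b) (fun y hy => hy0min y hy)
  have hy0m : y0 ≤ m n := hmgreat.2 hloc.deriv_eq_zero
  have hlowerx : a ≤ A * m n := by
    have h1 : a / A ≤ m n := le_trans hy0mem.1 hy0m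
    have h2 : A * (a / A) ≤ A * m n := mul_le_mul_of_nonneg_left h1 hApos.le
    have h3 : A * (a / A) = a := by field_simp
    linarith
  rw [Real.dist_eq, abs_lt]
  constructor <;> simp only [hadef, hbdef] at hlowerx hupper <;> linarith
end

section
/- Fix β ∈ (0, log 4), α > 0, b ∈ {1, 0, −1}, and k ∈ ℝ with K'(β)·b − k < 0. Define β_n = β + b/n^α, K_n = K(β) + k/n^α, and f(b,k) = (96β(k − b·K'(β))/((e^β + 2)²(4 − e^β)))^{1/2}. Suppose (m_n) is a sequence of positive real numbers such that m_n → 0 and, for all sufficiently large n, m_n is a critical point of G_{β_n,K_n}, i.e., G'_{β_n,K_n}(m_n) = 0. Then n^{α/2}·m_n → f(b,k) as n → ∞; i.e., m_n ∼ f(b,k)/n^{α/2}. -/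
open Real Filter

lemma sinh_div_lim : Tendsto (fun x : ℝ => Real.sinh x / x) (nhdsWithin 0 {x | x ≠ 0}) (nhds 1) := by
  have h := (Real.hasDerivAt_sinh 0)
  rw [hasDerivAt_iff_tendsto_slope] at h
  rw [Real.cosh_zero] at h
  refine h.congr' ?_
  filter_upwards [self_mem_nhdsWithin] with x hx
  simp [slope_def_field, Real.sinh_zero]

lemma sub_lim : Tendsto (fun x : ℝ => x) (nhdsWithin (0:ℝ) (Set.Ioi 0)) (nhdsWithin 0 {x | x ≠ 0}) := by
  apply tendsto_nhdsWithin_mono_right _ tendsto_id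
  intro x hx
  exact ne_of_gt hx

lemma cosh_sub_one (x : ℝ) : Real.cosh x - 1 = 2 * Real.sinh (x/2) ^ 2 := by
  have e1 := Real.cosh_two_mul (x/2)
  have e2 : 2 * (x/2) = x := by ring
  rw [e2] at e1
  have e3 := Real.cosh_sq (x/2)
  nlinarith [e1, e3]

lemma tau_lim : Tendsto (fun x : ℝ => (Real.cosh x - 1) / x ^ 2) (nhdsWithin 0 (Set.Ioi 0)) (nhds (1/2)) := by
  have h1 : Tendsto (fun x : ℝ => Real.sinh x / x) (nhdsWithin 0 (Set.Ioi 0)) (nhds 1) :=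
    sinh_div_lim.comp sub_lim
  have hhalf : Tendsto (fun x : ℝ => Real.sinh (x/2) / (x/2)) (nhdsWithin 0 (Set.Ioi 0)) (nhds 1) := by
    refine h1.comp ?_
    apply tendsto_nhdsWithin_of_tendsto_nhds_of_eventually_within
    · have : Tendsto (fun x:ℝ => x / 2) (nhdsWithin (0:ℝ) (Set.Ioi 0)) (nhds ((0:ℝ)/2)) :=
        Tendsto.div_const (tendsto_id.mono_left nhdsWithin_le_nhds) 2
      simpa using this
    · filter_upwards [self_mem_nhdsWithin] with x hx
      exact div_pos (show (0:ℝ) < x from hx) two_pos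
  have hmain : Tendsto (fun x : ℝ => (1/2) * (Real.sinh (x/2) / (x/2))^2) (nhdsWithin 0 (Set.Ioi 0)) (nhds ((1/2) * 1^2)) :=
    (hhalf.pow 2).const_mul _
  norm_num at hmain
  refine Tendsto.congr' ?_ hmain
  filter_upwards [self_mem_nhdsWithin] with x hx
  have hx0 : x ≠ 0 := ne_of_gt hx
  rw [cosh_sub_one]
  field_simp

lemma sigma_lim : Tendsto (fun x : ℝ => (Real.sinh x - x) / x ^ 3) (nhdsWithin 0 (Set.Ioi 0)) (nhds (1/6)) := by
  apply HasDerivAt.lhopital_zero_nhdsGT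
    (f' := fun x => Real.cosh x - 1) (g' := fun x => 3 * x ^ 2)
  · filter_upwards with x
    exact (Real.hasDerivAt_sinh x).sub (hasDerivAt_id x)
  · filter_upwards with x
    simpa using (hasDerivAt_pow 3 x)
  · filter_upwards [self_mem_nhdsWithin] with x hx
    have : (0:ℝ) < x := hx
    positivity
  · have : Tendsto (fun x : ℝ => Real.sinh x - x) (nhds 0) (nhds (Real.sinh 0 - 0)) :=
      (Real.continuous_sinh.sub continuous_id).continuousAt.tendsto
    simp only [Real.sinh_zero, sub_zero] at this
    exact this.mono_left nhdsWithin_le_nhds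
  · have : Tendsto (fun x : ℝ => x ^ 3) (nhds 0) (nhds ((0:ℝ) ^ 3)) := (continuous_pow 3).continuousAt.tendsto
    norm_num at this
    exact this.mono_left nhdsWithin_le_nhds
  · have := tau_lim.div_const 3
    norm_num at this
    refine Tendsto.congr' ?_ this
    filter_upwards [self_mem_nhdsWithin] with x hx
    have hx0 : (x:ℝ) ≠ 0 := ne_of_gt hx
    rw [div_div, mul_comm]

lemma hasDerivAt_cgf (β t : ℝ) : HasDerivAt (cgf β)
    (Real.exp (-β) * (Real.exp t - Real.exp (-t)) /
      (1 + Real.exp (-β) * (Real.exp t + Real.exp (-t)))) t := by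
  have hNpos : ∀ s : ℝ, (0:ℝ) < 1 + Real.exp (-β) * (Real.exp s + Real.exp (-s)) := by
    intro s; positivity
  have hDpos : (0:ℝ) < 1 + 2 * Real.exp (-β) := by positivity
  have hcgf : cgf β = fun s => Real.log (1 + Real.exp (-β) * (Real.exp s + Real.exp (-s)))
      - Real.log (1 + 2 * Real.exp (-β)) := by
    funext s
    rw [cgf, Real.log_div (hNpos s).ne' hDpos.ne']
  rw [hcgf]
  have h2 : HasDerivAt (fun s : ℝ => Real.exp (-s)) (-Real.exp (-t)) t := by
    simpa [Function.comp_def] using ((Real.hasDerivAt_exp (-t)).comp t (hasDerivAt_neg t))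
  have hN : HasDerivAt (fun s => 1 + Real.exp (-β) * (Real.exp s + Real.exp (-s)))
      (Real.exp (-β) * (Real.exp t - Real.exp (-t))) t := by
    have := (((Real.hasDerivAt_exp t).add h2).const_mul (Real.exp (-β))).const_add 1
    simpa [mul_sub, sub_eq_add_neg] using this
  exact (hN.log (hNpos t).ne').sub_const _

lemma hasDerivAt_G (β K x : ℝ) : HasDerivAt (freeEnergyG β K)
    (2*β*K*x - 2*β*K * (Real.exp (-β) * (Real.exp (2*β*K*x) - Real.exp (-(2*β*K*x))) /
      (1 + Real.exp (-β) * (Real.exp (2*β*K*x) + Real.exp (-(2*β*K*x)))))) x := by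
  have hlin : HasDerivAt (fun y : ℝ => 2*β*K*y) (2*β*K) x := by
    simpa using (hasDerivAt_id x).const_mul (2*β*K)
  have hc := (hasDerivAt_cgf β (2*β*K*x)).comp x hlin
  have hsq : HasDerivAt (fun y : ℝ => β*K*y^2) (β*K*(2*x)) x := by
    simpa using (hasDerivAt_pow 2 x).const_mul (β*K)
  have : HasDerivAt (freeEnergyG β K) _ x := hsq.sub hc
  convert this using 1
  ring

lemma deriv_Kcurve (β : ℝ) (hβ : β ≠ 0) :
    deriv Kcurve β = (β * Real.exp β - Real.exp β - 2) / (4 * β ^ 2) := by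
  have h : HasDerivAt Kcurve
      ((Real.exp β * (4*β) - (Real.exp β + 2) * 4) / (4*β)^2) β := by
    have hf : HasDerivAt (fun b : ℝ => Real.exp b + 2) (Real.exp β) β := by
      simpa using (Real.hasDerivAt_exp β).add_const 2
    have hg : HasDerivAt (fun b : ℝ => 4*b) (4:ℝ) β := by
      simpa using (hasDerivAt_id β).const_mul (4:ℝ)
    exact hf.div hg (by simpa using hβ)
  rw [h.deriv]
  field_simp
  ring

lemma key_alg (B K mm : ℝ) (hB : 0 < B) (hK : 0 < K) (hm : 0 < mm)
    (hcrit : deriv (freeEnergyG B K) mm = 0) :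
    (2*B*K*mm)^2 * (2*Real.exp (-B) * ((Real.cosh (2*B*K*mm) - 1)/(2*B*K*mm)^2)
      - 4*B*K*Real.exp (-B) * ((Real.sinh (2*B*K*mm) - 2*B*K*mm)/(2*B*K*mm)^3))
    = 4*B*K*Real.exp (-B) - 1 - 2*Real.exp (-B) := by
  have hu : 0 < 2*B*K*mm := by positivity
  rw [(hasDerivAt_G B K mm).deriv] at hcrit
  set u := 2*B*K*mm with hudef
  have hden : (0:ℝ) < 1 + Real.exp (-B) * (Real.exp u + Real.exp (-u)) := by positivity
  -- from hcrit : u - u * (X / den) = 0  get  mm * den = X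
  have h2bk : (2*B*K) ≠ 0 := by positivity
  have hPQ : mm * (1 + Real.exp (-B) * (Real.exp u + Real.exp (-u)))
      = Real.exp (-B) * (Real.exp u - Real.exp (-u)) := by
    have h1 : 2*B*K*mm = 2*B*K * (Real.exp (-B) * (Real.exp u - Real.exp (-u)) /
        (1 + Real.exp (-B) * (Real.exp u + Real.exp (-u)))) := by
      rw [← hudef]; linarith [hcrit]
    have h2 : mm = Real.exp (-B) * (Real.exp u - Real.exp (-u)) /
        (1 + Real.exp (-B) * (Real.exp u + Real.exp (-u))) := by
      exact mul_left_cancel₀ h2bk h1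
    rw [h2]
    field_simp
  have hcosh : Real.exp u + Real.exp (-u) = 2 * Real.cosh u := by
    rw [Real.cosh_eq]; ring
  have hsinh : Real.exp u - Real.exp (-u) = 2 * Real.sinh u := by
    rw [Real.sinh_eq]; ring
  rw [hcosh, hsinh] at hPQ
  have hune : u ≠ 0 := ne_of_gt hu
  field_simp
  linear_combination (2*B*K) * hPQ

lemma num_lim (β b k α : ℝ) (hβ0 : 0 < β) (hα : 0 < α) :
    Tendsto (fun n : ℕ => (n:ℝ)^α *
      (4*(β + b/(n:ℝ)^α)*(Kcurve β + k/(n:ℝ)^α)*Real.exp (-(β + b/(n:ℝ)^α))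
        - 1 - 2*Real.exp (-(β + b/(n:ℝ)^α))))
      atTop (nhds (4*β*Real.exp (-β)*(k - b*deriv Kcurve β))) := by
  set ψ : ℝ → ℝ := fun ε => 4*(β + b*ε)*(Kcurve β + k*ε)*Real.exp (-(β + b*ε))
      - 1 - 2*Real.exp (-(β + b*ε)) with hψdef
  have hE : Real.exp β ≠ 0 := Real.exp_ne_zero β
  have hψ0 : ψ 0 = 0 := by
    simp only [hψdef, mul_zero, add_zero, Kcurve]
    rw [Real.exp_neg]
    field_simp
    ring
  have hb1 : HasDerivAt (fun ε : ℝ => β + b*ε) b 0 := by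
    simpa using ((hasDerivAt_id (0:ℝ)).const_mul b).const_add β
  have hk1 : HasDerivAt (fun ε : ℝ => Kcurve β + k*ε) k 0 := by
    simpa using ((hasDerivAt_id (0:ℝ)).const_mul k).const_add (Kcurve β)
  have he1 : HasDerivAt (fun ε : ℝ => Real.exp (-(β + b*ε))) (Real.exp (-β) * (-b)) 0 := by
    have := (Real.hasDerivAt_exp (-(β + b*0))).comp 0 hb1.neg
    simpa [Function.comp_def, Pi.neg_def] using this
  have hm1 : HasDerivAt (fun ε : ℝ => 4*(β + b*ε)*(Kcurve β + k*ε))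
      ((4*b)*(Kcurve β) + (4*β)*k) 0 := by
    have := (hb1.const_mul 4).mul hk1
    simpa [Pi.mul_def] using this
  have hψd : HasDerivAt ψ
      (((4*b)*(Kcurve β) + (4*β)*k) * Real.exp (-β)
        + (4*β*(Kcurve β)) * (Real.exp (-β)*(-b)) - 2*(Real.exp (-β)*(-b))) 0 := by
    have := ((hm1.mul he1).sub_const 1).sub (he1.const_mul 2)
    simp only [mul_zero, add_zero] at this
    exact this
  have hLeq : ((4*b)*(Kcurve β) + (4*β)*k) * Real.exp (-β)
        + (4*β*(Kcurve β)) * (Real.exp (-β)*(-b)) - 2*(Real.exp (-β)*(-b))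
      = 4*β*Real.exp (-β)*(k - b*deriv Kcurve β) := by
    rw [deriv_Kcurve β hβ0.ne', Kcurve]
    field_simp
    ring
  rw [hasDerivAt_iff_tendsto_slope, hLeq] at hψd
  have hslope : Tendsto (fun ε : ℝ => ψ ε / ε) (nhdsWithin 0 {x | x ≠ 0})
      (nhds (4*β*Real.exp (-β)*(k - b*deriv Kcurve β))) := by
    refine hψd.congr' ?_
    filter_upwards [self_mem_nhdsWithin] with x hx
    simp [slope_def_field, hψ0]
  have hnpow : Tendsto (fun n : ℕ => (n:ℝ)^α) atTop atTop :=
    (tendsto_rpow_atTop hα).comp tendsto_natCast_atTop_atTop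
  have heps : Tendsto (fun n : ℕ => ((n:ℝ)^α)⁻¹) atTop (nhdsWithin 0 {x | x ≠ 0}) := by
    apply tendsto_nhdsWithin_of_tendsto_nhds_of_eventually_within
    · exact hnpow.inv_tendsto_atTop
    · filter_upwards [hnpow.eventually_gt_atTop 0] with n hn
      exact (inv_pos.mpr hn).ne'
  have hcomp := hslope.comp heps
  refine hcomp.congr' ?_
  filter_upwards [hnpow.eventually_gt_atTop 0] with n hn
  have hx : ((n:ℝ)^α) ≠ 0 := hn.ne'
  simp only [Function.comp, hψdef, div_eq_mul_inv]
  field_simp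


/-- exact asymptotics of positive critical points of
`G_{β_n,K_n}` for the sequence converging to a second-order point:
`m_n ∼ f(b,k)/n^{α/2}`. -/
theorem stmt17 (β α b k : ℝ) (hβ0 : 0 < β) (hβ : β < Real.log 4) (hα : 0 < α)
    (hb : b = 1 ∨ b = 0 ∨ b = -1) (hk : deriv Kcurve β * b - k < 0)
    (m : ℕ → ℝ) (hmpos : ∀ n : ℕ, 0 < m n) (hm0 : Tendsto m atTop (nhds 0))
    (hcrit : ∀ᶠ n : ℕ in atTop,
      deriv (freeEnergyG (β + b / (n : ℝ) ^ α) (Kcurve β + k / (n : ℝ) ^ α)) (m n) = 0) :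
    Tendsto (fun n : ℕ => (n : ℝ) ^ (α / 2) * m n) atTop
      (nhds (Real.sqrt (96 * β * (k - b * deriv Kcurve β) /
        ((Real.exp β + 2) ^ 2 * (4 - Real.exp β))))) := by
  have hE4 : Real.exp β < 4 := by
    have h := Real.exp_lt_exp.mpr hβ
    rwa [Real.exp_log (by norm_num : (0:ℝ) < 4)] at h
  have hE0 : (0:ℝ) < Real.exp β := Real.exp_pos β
  have h4E : (0:ℝ) < 4 - Real.exp β := by linarith
  have hKc : 0 < Kcurve β := by rw [Kcurve]; positivity
  have hkb : 0 < k - b * deriv Kcurve β := by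
    have := mul_comm (deriv Kcurve β) b
    linarith
  set B : ℕ → ℝ := fun n => β + b / (n:ℝ)^α with hBdef
  set Kf : ℕ → ℝ := fun n => Kcurve β + k / (n:ℝ)^α with hKfdef
  have hnpow : Tendsto (fun n : ℕ => (n:ℝ)^α) atTop atTop :=
    (tendsto_rpow_atTop hα).comp tendsto_natCast_atTop_atTop
  have htB : Tendsto B atTop (nhds β) := by
    have h1 : Tendsto (fun n : ℕ => b/(n:ℝ)^α) atTop (nhds 0) := by
      simpa [div_eq_mul_inv] using hnpow.inv_tendsto_atTop.const_mul b
    have := h1.const_add β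
    simpa using this
  have htK : Tendsto Kf atTop (nhds (Kcurve β)) := by
    have h1 : Tendsto (fun n : ℕ => k/(n:ℝ)^α) atTop (nhds 0) := by
      simpa [div_eq_mul_inv] using hnpow.inv_tendsto_atTop.const_mul k
    have := h1.const_add (Kcurve β)
    simpa using this
  have hBpos : ∀ᶠ n : ℕ in atTop, 0 < B n := htB.eventually (eventually_gt_nhds hβ0)
  have hKpos : ∀ᶠ n : ℕ in atTop, 0 < Kf n := htK.eventually (eventually_gt_nhds hKc)
  -- the exact equation satisfied eventually
  have E2 : ∀ᶠ n : ℕ in atTop,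
      (2*B n*Kf n*m n)^2 * (2*Real.exp (-B n) * ((Real.cosh (2*B n*Kf n*m n) - 1)/(2*B n*Kf n*m n)^2)
        - 4*B n*Kf n*Real.exp (-B n) * ((Real.sinh (2*B n*Kf n*m n) - 2*B n*Kf n*m n)/(2*B n*Kf n*m n)^3))
      = 4*B n*Kf n*Real.exp (-B n) - 1 - 2*Real.exp (-B n) := by
    filter_upwards [hcrit, hBpos, hKpos] with n h1 h2 h3
    exact key_alg (B n) (Kf n) (m n) h2 h3 (hmpos n) h1
  -- u → 0 within positives
  have hupos : ∀ᶠ n : ℕ in atTop, 0 < 2*B n*Kf n*m n := by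
    filter_upwards [hBpos, hKpos] with n h2 h3
    have := hmpos n
    positivity
  have htu : Tendsto (fun n : ℕ => 2*B n*Kf n*m n) atTop (nhds 0) := by
    have := ((htB.const_mul 2).mul htK).mul hm0
    simpa using this
  have htu' : Tendsto (fun n : ℕ => 2*B n*Kf n*m n) atTop (nhdsWithin 0 (Set.Ioi 0)) :=
    tendsto_nhdsWithin_of_tendsto_nhds_of_eventually_within _ htu hupos
  have htau : Tendsto (fun n : ℕ => (Real.cosh (2*B n*Kf n*m n) - 1)/(2*B n*Kf n*m n)^2)
      atTop (nhds (1/2)) := tau_lim.comp htu'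
  have hsig : Tendsto (fun n : ℕ => (Real.sinh (2*B n*Kf n*m n) - 2*B n*Kf n*m n)/(2*B n*Kf n*m n)^3)
      atTop (nhds (1/6)) := sigma_lim.comp htu'
  have htp : Tendsto (fun n : ℕ => Real.exp (-B n)) atTop (nhds (Real.exp (-β))) :=
    (Real.continuous_exp.tendsto _).comp htB.neg
  have htA : Tendsto (fun n : ℕ => 4*B n*Kf n*Real.exp (-B n)) atTop
      (nhds (4*β*Kcurve β*Real.exp (-β))) := ((htB.const_mul 4).mul htK).mul htp
  have hKval : 4*β*Kcurve β = Real.exp β + 2 := by rw [Kcurve]; field_simp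
  -- denominator tendsto
  have htD : Tendsto (fun n : ℕ =>
      2*Real.exp (-B n) * ((Real.cosh (2*B n*Kf n*m n) - 1)/(2*B n*Kf n*m n)^2)
        - 4*B n*Kf n*Real.exp (-B n) * ((Real.sinh (2*B n*Kf n*m n) - 2*B n*Kf n*m n)/(2*B n*Kf n*m n)^3))
      atTop (nhds (Real.exp (-β)*(4 - Real.exp β)/6)) := by
    have h := ((htp.const_mul 2).mul htau).sub (htA.mul hsig)
    convert h using 2
    rw [hKval]
    ring
  have hdpos : (0:ℝ) < Real.exp (-β)*(4 - Real.exp β)/6 := by positivity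
  have hDne : ∀ᶠ n : ℕ in atTop,
      (2*Real.exp (-B n) * ((Real.cosh (2*B n*Kf n*m n) - 1)/(2*B n*Kf n*m n)^2)
        - 4*B n*Kf n*Real.exp (-B n) * ((Real.sinh (2*B n*Kf n*m n) - 2*B n*Kf n*m n)/(2*B n*Kf n*m n)^3)) ≠ 0 :=
    htD.eventually_ne hdpos.ne'
  -- numerator tendsto
  have hNum : Tendsto (fun n : ℕ => (n:ℝ)^α *
      (4*B n*Kf n*Real.exp (-B n) - 1 - 2*Real.exp (-B n))) atTop
      (nhds (4*β*Real.exp (-β)*(k - b*deriv Kcurve β))) := num_lim β b k α hβ0 hα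
  have hfrac := hNum.div htD hdpos.ne'
  have hsq : Tendsto (fun n : ℕ => (n:ℝ)^α * (2*B n*Kf n*m n)^2) atTop
      (nhds (4*β*Real.exp (-β)*(k - b*deriv Kcurve β) / (Real.exp (-β)*(4 - Real.exp β)/6))) := by
    refine hfrac.congr' ?_
    filter_upwards [E2, hDne] with n h1 h2
    simp only [Pi.div_apply]
    rw [← h1, mul_div_assoc, mul_div_assoc, div_self h2, mul_one]
  have hsqrt := (Real.continuous_sqrt.tendsto _).comp hsq
  have htuhalf : Tendsto (fun n : ℕ => (n:ℝ)^(α/2) * (2*B n*Kf n*m n)) atTop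
      (nhds (Real.sqrt (4*β*Real.exp (-β)*(k - b*deriv Kcurve β) / (Real.exp (-β)*(4 - Real.exp β)/6)))) := by
    refine hsqrt.congr' ?_
    filter_upwards [hupos] with n h1
    have hn0 : (0:ℝ) ≤ (n:ℝ) := n.cast_nonneg
    simp only [Function.comp]
    rw [Real.sqrt_mul (Real.rpow_nonneg hn0 α), Real.sqrt_sq h1.le, Real.sqrt_eq_rpow,
      ← Real.rpow_mul hn0, mul_one_div]
  have h2bk : Tendsto (fun n : ℕ => 2*B n*Kf n) atTop (nhds (2*β*Kcurve β)) :=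
    (htB.const_mul 2).mul htK
  have hbkpos : (0:ℝ) < 2*β*Kcurve β := by positivity
  have hfinal := htuhalf.div h2bk hbkpos.ne'
  have hvalue : Real.sqrt (4*β*Real.exp (-β)*(k - b*deriv Kcurve β) / (Real.exp (-β)*(4 - Real.exp β)/6))
      / (2*β*Kcurve β)
      = Real.sqrt (96 * β * (k - b * deriv Kcurve β) /
        ((Real.exp β + 2) ^ 2 * (4 - Real.exp β))) := by
    have hLd : (0:ℝ) ≤ 4*β*Real.exp (-β)*(k - b*deriv Kcurve β) / (Real.exp (-β)*(4 - Real.exp β)/6) := by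
      positivity
    have harg : 96 * β * (k - b * deriv Kcurve β) / ((Real.exp β + 2) ^ 2 * (4 - Real.exp β))
        = (4*β*Real.exp (-β)*(k - b*deriv Kcurve β) / (Real.exp (-β)*(4 - Real.exp β)/6))
          / (2*β*Kcurve β)^2 := by
      rw [Kcurve, Real.exp_neg]
      have hE2 : Real.exp β + 2 ≠ 0 := by positivity
      field_simp
      ring
    rw [harg, Real.sqrt_div hLd, Real.sqrt_sq hbkpos.le]
  rw [hvalue] at hfinal
  refine hfinal.congr' ?_
  filter_upwards [hBpos, hKpos] with n h2 h3
  simp only [Pi.div_apply]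
  have hc : 2*B n*Kf n ≠ 0 := by positivity
  field_simp
end
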